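/- arXiv:math/0605041 — 5 statements merged into one kernel-verified Lean document; each statement's English description precedes it below -/
import Mathlib

section
/- Proposition: Let g be a framed Lie algebra over k, and let ∇ : T(g) → End_k(T(g)) be the unique k-algebra homomorphism with ∇(x) = ∇_x for all x ∈ g. Then for every u ∈ J(g), the derivation extension of r(u) to T(g) equals ∇(e(u)); that is, r = ∇ ∘ e. -/
set_option linter.unusedSectionVars false

noncomputable section
open TensorAlgebra TensorProduct

variable (k : Type) [Field k] [CharZero k] (g : Type) [LieRing g] [LieAlgebra k g]

/-- `Λ(g)`: the span of the commutators `x ⊗ y - y ⊗ x` of generators. -/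
def Lam : Submodule k (TensorAlgebra k g) :=
  Submodule.span k {w | ∃ x y : g, w = ι k x * ι k y - ι k y * ι k x}

/-- `J(g) = T(g)·Λ(g)`, the left ideal generated by `Λ(g)`, as a `k`-submodule. -/
def Jg : Submodule k (TensorAlgebra k g) :=
  Submodule.span k {w | ∃ (a : TensorAlgebra k g) (x y : g),
    w = a * (ι k x * ι k y - ι k y * ι k x)}

lemma mul_mem_Jg {ω : TensorAlgebra k g} (hω : ω ∈ Lam k g) (b : TensorAlgebra k g) :
    b * ω ∈ Jg k g := by
  induction hω using Submodule.span_induction with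
  | mem w hw =>
      obtain ⟨x, y, rfl⟩ := hw
      exact Submodule.subset_span ⟨b, x, y, rfl⟩
  | zero => simp
  | add u v hu hv hbu hbv => simpa [mul_add] using (Jg k g).add_mem hbu hbv
  | smul a u hu hbu => simpa [mul_smul_comm] using (Jg k g).smul_mem a hbu

/-- Right multiplication by `ω ∈ Λ(g)`, corestricted to `J(g)`. -/
def mulJ {ω : TensorAlgebra k g} (hω : ω ∈ Lam k g) :
    TensorAlgebra k g →ₗ[k] Jg k g :=
  LinearMap.codRestrict _ (LinearMap.mulRight k ω) (mul_mem_Jg k g hω)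

lemma Lam_le_Jg : Lam k g ≤ Jg k g := fun ω hω => by
  simpa using mul_mem_Jg k g hω 1

lemma mul_mem_Jg' {v : TensorAlgebra k g} (hv : v ∈ Jg k g) (b : TensorAlgebra k g) :
    b * v ∈ Jg k g := by
  induction hv using Submodule.span_induction with
  | mem w hw =>
      obtain ⟨a, x, y, rfl⟩ := hw
      exact Submodule.subset_span ⟨b * a, x, y, (mul_assoc _ _ _).symm⟩
  | zero => simp
  | add u v hu hv hbu hbv => simpa [mul_add] using (Jg k g).add_mem hbu hbv
  | smul a u hu hbu => simpa [mul_smul_comm] using (Jg k g).smul_mem a hbu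

/-- Monomials of length at most `n` times a commutator. -/
def MonLe (n : ℕ) : Set (TensorAlgebra k g) :=
  {v | ∃ l : List g, l.length ≤ n ∧ ∃ x y : g,
    v = (l.map (ι k)).prod * (ι k x * ι k y - ι k y * ι k x)}

def MSub (n : ℕ) : Submodule k (TensorAlgebra k g) := Submodule.span k (MonLe k g n)

lemma MSub_mono : Monotone (MSub k g) := by
  intro m n hmn
  apply Submodule.span_mono
  rintro v ⟨l, hl, x, y, rfl⟩
  exact ⟨l, hl.trans hmn, x, y, rfl⟩

lemma MSub_le_Jg (n : ℕ) : MSub k g n ≤ Jg k g := by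
  rw [MSub, Submodule.span_le]
  rintro v ⟨l, hl, x, y, rfl⟩
  exact Submodule.subset_span ⟨(l.map (ι k)).prod, x, y, rfl⟩

lemma iota_mul_MSub (a : g) {n : ℕ} {v : TensorAlgebra k g} (hv : v ∈ MSub k g n) :
    ι k a * v ∈ MSub k g (n + 1) := by
  induction hv using Submodule.span_induction with
  | mem w hw =>
      obtain ⟨l, hl, x, y, rfl⟩ := hw
      exact Submodule.subset_span
        ⟨a :: l, by simpa using Nat.succ_le_succ hl, x, y, by simp [mul_assoc]⟩
  | zero => simp
  | add u v hu hv hbu hbv => simpa [mul_add] using add_mem hbu hbv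
  | smul c u hu hbu => simpa [mul_smul_comm] using Submodule.smul_mem _ c hbu

lemma Lam_le_MSub (n : ℕ) : Lam k g ≤ MSub k g n := by
  rw [Lam, Submodule.span_le]
  rintro v ⟨x, y, rfl⟩
  exact Submodule.subset_span ⟨[], by simp, x, y, by simp⟩

/-- Derivations of the tensor algebra agreeing on generators are equal. -/
lemma derivation_ext (D E : Module.End k (TensorAlgebra k g))
    (hD : ∀ a b, D (a * b) = D a * b + a * D b)
    (hE : ∀ a b, E (a * b) = E a * b + a * E b)
    (h : ∀ x : g, D (ι k x) = E (ι k x)) : D = E := by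
  have hD1 : D 1 = 0 := by
    have h2 : D 1 = D 1 + D 1 := by simpa using hD 1 1
    exact (left_eq_add.mp h2)
  have hE1 : E 1 = 0 := by
    have h2 : E 1 = E 1 + E 1 := by simpa using hE 1 1
    exact (left_eq_add.mp h2)
  ext a
  induction a using TensorAlgebra.induction with
  | algebraMap r =>
      rw [Algebra.algebraMap_eq_smul_one, map_smul, map_smul, hD1, hE1]
  | ι x => exact h x
  | mul a b ha hb => rw [hD, hE, ha, hb]
  | add a b ha hb => rw [map_add, map_add, ha, hb]

lemma N_Lam (N : g → Module.End k (TensorAlgebra k g))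
    (d : g →ₗ[k] g →ₗ[k] g)
    (hNd : ∀ (x : g) (a b : TensorAlgebra k g), N x (a * b) = N x a * b + a * N x b)
    (hN : ∀ x y : g, N x (ι k y) = ι k (d x y))
    (z : g) {v : TensorAlgebra k g} (hv : v ∈ Lam k g) : N z v ∈ Lam k g := by
  induction hv using Submodule.span_induction with
  | mem w hw =>
      obtain ⟨x, y, rfl⟩ := hw
      have hrw : N z (ι k x * ι k y - ι k y * ι k x) =
          (ι k (d z x) * ι k y - ι k y * ι k (d z x)) +
          (ι k x * ι k (d z y) - ι k (d z y) * ι k x) := by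
        rw [map_sub, hNd, hNd, hN, hN]
        abel
      rw [hrw]
      exact add_mem (Submodule.subset_span ⟨_, _, rfl⟩) (Submodule.subset_span ⟨_, _, rfl⟩)
  | zero => simp
  | add u v hu hv hbu hbv => simpa using add_mem hbu hbv
  | smul c u hu hbu => simpa using Submodule.smul_mem _ c hbu

lemma N_Jg (N : g → Module.End k (TensorAlgebra k g))
    (d : g →ₗ[k] g →ₗ[k] g)
    (hNd : ∀ (x : g) (a b : TensorAlgebra k g), N x (a * b) = N x a * b + a * N x b)
    (hN : ∀ x y : g, N x (ι k y) = ι k (d x y))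
    (z : g) {v : TensorAlgebra k g} (hv : v ∈ Jg k g) : N z v ∈ Jg k g := by
  induction hv using Submodule.span_induction with
  | mem w hw =>
      obtain ⟨a, x, y, rfl⟩ := hw
      rw [hNd]
      have hω : ι k x * ι k y - ι k y * ι k x ∈ Lam k g :=
        Submodule.subset_span ⟨x, y, rfl⟩
      exact add_mem (mul_mem_Jg k g hω _)
        (mul_mem_Jg k g (N_Lam k g N d hNd hN z hω) _)
  | zero => simp
  | add u v hu hv hbu hbv => simpa using add_mem hbu hbv
  | smul c u hu hbu => simpa using Submodule.smul_mem _ c hbu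

lemma N_mono (N : g → Module.End k (TensorAlgebra k g))
    (d : g →ₗ[k] g →ₗ[k] g)
    (hNd : ∀ (x : g) (a b : TensorAlgebra k g), N x (a * b) = N x a * b + a * N x b)
    (hN : ∀ x y : g, N x (ι k y) = ι k (d x y))
    (z : g) (l : List g) (x y : g) :
    N z ((l.map (ι k)).prod * (ι k x * ι k y - ι k y * ι k x)) ∈ MSub k g l.length := by
  induction l with
  | nil =>
      simp only [List.map_nil, List.prod_nil, one_mul, List.length_nil]
      exact Lam_le_MSub k g 0
        (N_Lam k g N d hNd hN z (Submodule.subset_span ⟨x, y, rfl⟩))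
  | cons a l' ih =>
      have hrw : ((a :: l').map (ι k)).prod * (ι k x * ι k y - ι k y * ι k x) =
          ι k a * ((l'.map (ι k)).prod * (ι k x * ι k y - ι k y * ι k x)) := by
        simp [mul_assoc]
      rw [hrw, hNd, hN]
      refine add_mem ?_ ?_
      · exact Submodule.subset_span ⟨d z a :: l', by simp, x, y, by simp [mul_assoc]⟩
      · simpa using iota_mul_MSub k g a ih

lemma N_MSub (N : g → Module.End k (TensorAlgebra k g))
    (d : g →ₗ[k] g →ₗ[k] g)
    (hNd : ∀ (x : g) (a b : TensorAlgebra k g), N x (a * b) = N x a * b + a * N x b)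
    (hN : ∀ x y : g, N x (ι k y) = ι k (d x y))
    (z : g) {n : ℕ} {v : TensorAlgebra k g} (hv : v ∈ MSub k g n) :
    N z v ∈ MSub k g n := by
  induction hv using Submodule.span_induction with
  | mem w hw =>
      obtain ⟨l, hl, x, y, rfl⟩ := hw
      exact MSub_mono k g hl (N_mono k g N d hNd hN z l x y)
  | zero => simp
  | add u v hu hv hbu hbv => simpa using add_mem hbu hbv
  | smul c u hu hbu => simpa using Submodule.smul_mem _ c hbu

/-- **Proposition.** If `∇ : T(g) → End(T(g))` is the unique algebra homomorphism with
`∇(x) = ∇ₓ` for `x ∈ g`, then the derivation extension of `r(u)` equals `∇(e(u))` for every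
`u ∈ J(g)`; that is, `r = ∇ ∘ e`. -/
theorem r_eq_nabla_comp_e
    (d : g →ₗ[k] g →ₗ[k] g)
    (N : g → Module.End k (TensorAlgebra k g))
    (hNd : ∀ (x : g) (a b : TensorAlgebra k g), N x (a * b) = N x a * b + a * N x b)
    (hN : ∀ x y : g, N x (ι k y) = ι k (d x y))
    (r : Jg k g →ₗ[k] Module.End k g)
    (hr1 : ∀ (x y : g) (h : ι k x * ι k y - ι k y * ι k x ∈ Jg k g) (z : g),
      r ⟨_, h⟩ z = d x (d y z) - d y (d x z) - d ⁅x, y⁆ z)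
    (hr2 : ∀ (x : g) (u : Jg k g) (h : ι k x * (u : TensorAlgebra k g) + N x u ∈ Jg k g),
      r ⟨_, h⟩ = d x ∘ₗ r u - r u ∘ₗ d x)
    (rD : Jg k g →ₗ[k] Module.End k (TensorAlgebra k g))
    (hrD1 : ∀ (u : Jg k g) (z : g), rD u (ι k z) = ι k (r u z))
    (hrD2 : ∀ (u : Jg k g) (a b : TensorAlgebra k g),
      rD u (a * b) = rD u a * b + a * rD u b)
    (e : Jg k g →ₗ[k] TensorAlgebra k g)
    (he1 : ∀ (x y : g) (h : ι k x * ι k y - ι k y * ι k x ∈ Jg k g),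
      e ⟨_, h⟩ = ι k x * ι k y - ι k y * ι k x - ι k ⁅x, y⁆)
    (he2 : ∀ (x : g) (u : Jg k g) (h : ι k x * (u : TensorAlgebra k g) + N x u ∈ Jg k g),
      e ⟨_, h⟩ = ι k x * e u - e u * ι k x)
    (Nh : TensorAlgebra k g →ₐ[k] Module.End k (TensorAlgebra k g))
    (hNh : ∀ x : g, Nh (ι k x) = N x)
    (u : Jg k g) :
    rD u = Nh (e u) := by
    let Pset : Submodule k (Jg k g) := LinearMap.eqLocus rD (Nh.toLinearMap ∘ₗ e)
    have memP : ∀ w : Jg k g, w ∈ Pset ↔ rD w = Nh (e w) := fun w => Iff.rfl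
    have base : ∀ (x y : g) (h : ι k x * ι k y - ι k y * ι k x ∈ Jg k g),
        (⟨_, h⟩ : Jg k g) ∈ Pset := by
      intro x y h
      rw [memP]
      rw [he1 x y h]
      simp only [map_sub, map_mul, hNh]
      apply derivation_ext k g _ _ (hrD2 _)
      · intro a b
        simp only [LinearMap.sub_apply, Module.End.mul_apply, map_add, map_sub, hNd,
          mul_add, add_mul, sub_mul, mul_sub]
        abel
      · intro z
        rw [hrD1, hr1 x y h z]
        simp only [LinearMap.sub_apply, Module.End.mul_apply, hN, map_sub]
    have step : ∀ (x : g) (w : Jg k g), w ∈ Pset →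
        ∀ (h : ι k x * (w : TensorAlgebra k g) + N x w ∈ Jg k g),
        (⟨_, h⟩ : Jg k g) ∈ Pset := by
      intro x w hw h
      rw [memP] at hw ⊢
      rw [he2 x w h]
      simp only [map_sub, map_mul, hNh, ← hw]
      apply derivation_ext k g _ _ (hrD2 _)
      · intro a b
        simp only [LinearMap.sub_apply, Module.End.mul_apply, map_add, map_sub, hNd, hrD2,
          mul_add, add_mul, sub_mul, mul_sub]
        abel
      · intro z
        rw [hrD1, hr2 x w h]
        simp only [LinearMap.sub_apply, Module.End.mul_apply, LinearMap.comp_apply,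
          hN, hrD1, map_sub]
    let K : Submodule k (TensorAlgebra k g) := Pset.map (Jg k g).subtype
    have memK : ∀ {v : TensorAlgebra k g}, v ∈ K →
        ∃ h : v ∈ Jg k g, (⟨v, h⟩ : Jg k g) ∈ Pset := by
      rintro v ⟨w, hw, rfl⟩
      exact ⟨w.2, hw⟩
    have L2 : ∀ n, MSub k g n ≤ K := by
      intro n
      induction n with
      | zero =>
          rw [MSub, Submodule.span_le]
          rintro v ⟨l, hl, x, y, rfl⟩
          have hnil : l = [] := List.length_eq_zero_iff.mp (Nat.le_zero.mp hl)
          subst hnil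
          simp only [List.map_nil, List.prod_nil, one_mul]
          have hJ : ι k x * ι k y - ι k y * ι k x ∈ Jg k g :=
            Lam_le_Jg k g (Submodule.subset_span ⟨x, y, rfl⟩)
          exact ⟨⟨_, hJ⟩, base x y hJ, rfl⟩
      | succ n ih =>
          rw [MSub, Submodule.span_le]
          rintro v ⟨l, hl, x, y, rfl⟩
          match l, hl with
          | [], _ =>
              simp only [List.map_nil, List.prod_nil, one_mul]
              have hJ : ι k x * ι k y - ι k y * ι k x ∈ Jg k g :=
                Lam_le_Jg k g (Submodule.subset_span ⟨x, y, rfl⟩)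
              exact ⟨⟨_, hJ⟩, base x y hJ, rfl⟩
          | a :: l', hl =>
              set m : TensorAlgebra k g :=
                (l'.map (ι k)).prod * (ι k x * ι k y - ι k y * ι k x) with hm_def
              have hm : m ∈ MSub k g n :=
                Submodule.subset_span ⟨l', by simpa using Nat.lt_succ_iff.mp hl, x, y, rfl⟩
              obtain ⟨hmJ, hmP⟩ := memK (ih hm)
              have hNm : N a m ∈ MSub k g n := N_MSub k g N d hNd hN a hm
              obtain ⟨hNJ, hNP⟩ := memK (ih hNm)
              have hmul : ι k a * m ∈ Jg k g := mul_mem_Jg' k g hmJ _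
              have hsum : ι k a * m + N a m ∈ Jg k g := add_mem hmul hNJ
              have hstep : (⟨ι k a * m + N a m, hsum⟩ : Jg k g) ∈ Pset :=
                step a ⟨m, hmJ⟩ hmP hsum
              have heq : (⟨ι k a * m, hmul⟩ : Jg k g) =
                  (⟨ι k a * m + N a m, hsum⟩ : Jg k g) - ⟨N a m, hNJ⟩ := by
                apply Subtype.ext
                simp
              have hgoal : ((a :: l').map (ι k)).prod *
                  (ι k x * ι k y - ι k y * ι k x) = ι k a * m := by
                simp [hm_def, mul_assoc]
              rw [hgoal]
              refine ⟨⟨ι k a * m, hmul⟩, ?_, rfl⟩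
              rw [heq]
              exact Pset.sub_mem hstep hNP
    have hdir : Directed (· ≤ ·) (MSub k g) := (MSub_mono k g).directed_le
    have mulW : ∀ a : TensorAlgebra k g, ∀ v ∈ (⨆ n, MSub k g n),
        a * v ∈ ⨆ n, MSub k g n := by
      intro a
      induction a using TensorAlgebra.induction with
      | algebraMap c =>
          intro v hv
          rw [Algebra.algebraMap_eq_smul_one, smul_mul_assoc, one_mul]
          exact Submodule.smul_mem _ _ hv
      | ι x =>
          intro v hv
          obtain ⟨n, hn⟩ := (Submodule.mem_iSup_of_directed _ hdir).mp hv
          exact (Submodule.mem_iSup_of_directed _ hdir).mpr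
            ⟨n + 1, iota_mul_MSub k g x hn⟩
      | mul a b ha hb => intro v hv; rw [mul_assoc]; exact ha _ (hb _ hv)
      | add a b ha hb => intro v hv; rw [add_mul]; exact add_mem (ha _ hv) (hb _ hv)
    have JgW : Jg k g ≤ ⨆ n, MSub k g n := by
      rw [Jg, Submodule.span_le]
      rintro v ⟨a, x, y, rfl⟩
      refine mulW a _ ?_
      exact (Submodule.mem_iSup_of_directed _ hdir).mpr
        ⟨0, Lam_le_MSub k g 0 (Submodule.subset_span ⟨x, y, rfl⟩)⟩
    have WK : (⨆ n, MSub k g n) ≤ K := iSup_le L2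
    obtain ⟨h, hP⟩ := memK (WK (JgW u.2))
    have hu : u = ⟨u.1, h⟩ := Subtype.ext rfl
    rw [hu]
    exact (memP _).mp hP
end
end

section
/- Lemma 2: Let g be a framed Lie algebra over k. For every ω ∈ Λ(g) and every v ∈ T(g), K(ω ⊗ v + ρ(ω)(v)) = κ(ω)(v), where ρ(ω)(v) = t(ω) ⊗ v + r(ω)(v) and κ(ω)(v) = e(ω) ⊗ K(v). -/
set_option linter.unusedSectionVars false

noncomputable section
open TensorAlgebra TensorProduct

variable (k : Type) [Field k] [CharZero k] (g : Type) [LieRing g] [LieAlgebra k g]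

lemma derivation_eq (D1 D2 : Module.End k (TensorAlgebra k g))
    (h1 : ∀ a b, D1 (a * b) = D1 a * b + a * D1 b)
    (h2 : ∀ a b, D2 (a * b) = D2 a * b + a * D2 b)
    (hi : ∀ z : g, D1 (ι k z) = D2 (ι k z)) : D1 = D2 := by
  have o1 : D1 1 = 0 := by
    have h := h1 1 1
    simp only [mul_one, one_mul] at h
    exact (left_eq_add.mp h)
  have o2 : D2 1 = 0 := by
    have h := h2 1 1
    simp only [mul_one, one_mul] at h
    exact (left_eq_add.mp h)
  ext a
  induction a using TensorAlgebra.induction with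
  | algebraMap r =>
      rw [Algebra.algebraMap_eq_smul_one, map_smul, map_smul, o1, o2]
  | ι x => exact hi x
  | mul a b ha hb => rw [h1, h2, ha, hb]
  | add a b ha hb => rw [map_add, map_add, ha, hb]

/-- **Lemma 2.** For every `ω ∈ Λ(g)` and `v ∈ T(g)`,
`K(ω ⊗ v + ρ(ω)(v)) = κ(ω)(v)`, where `ρ(ω)(v) = t(ω) ⊗ v + r(ω)(v)` and
`κ(ω)(v) = e(ω) ⊗ K(v)`. -/
theorem lemma_two
    (d : g →ₗ[k] g →ₗ[k] g)
    (N : g → Module.End k (TensorAlgebra k g))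
    (hNd : ∀ (x : g) (a b : TensorAlgebra k g), N x (a * b) = N x a * b + a * N x b)
    (hN : ∀ x y : g, N x (ι k y) = ι k (d x y))
    (K : TensorAlgebra k g →ₗ[k] TensorAlgebra k g)
    (hK1 : K 1 = 1)
    (hK : ∀ (x : g) (u : TensorAlgebra k g), K (ι k x * u + N x u) = ι k x * K u)
    (t : Jg k g →ₗ[k] g)
    (ht1 : ∀ (x y : g) (h : ι k x * ι k y - ι k y * ι k x ∈ Jg k g),
      t ⟨_, h⟩ = d x y - d y x - ⁅x, y⁆)
    (ht2 : ∀ (x : g) (u : Jg k g) (h : ι k x * (u : TensorAlgebra k g) + N x u ∈ Jg k g),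
      t ⟨_, h⟩ = d x (t u))
    (r : Jg k g →ₗ[k] Module.End k g)
    (hr1 : ∀ (x y : g) (h : ι k x * ι k y - ι k y * ι k x ∈ Jg k g) (z : g),
      r ⟨_, h⟩ z = d x (d y z) - d y (d x z) - d ⁅x, y⁆ z)
    (hr2 : ∀ (x : g) (u : Jg k g) (h : ι k x * (u : TensorAlgebra k g) + N x u ∈ Jg k g),
      r ⟨_, h⟩ = d x ∘ₗ r u - r u ∘ₗ d x)
    (rD : Jg k g →ₗ[k] Module.End k (TensorAlgebra k g))
    (hrD1 : ∀ (u : Jg k g) (z : g), rD u (ι k z) = ι k (r u z))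
    (hrD2 : ∀ (u : Jg k g) (a b : TensorAlgebra k g),
      rD u (a * b) = rD u a * b + a * rD u b)
    (e : Jg k g →ₗ[k] TensorAlgebra k g)
    (he1 : ∀ (x y : g) (h : ι k x * ι k y - ι k y * ι k x ∈ Jg k g),
      e ⟨_, h⟩ = ι k x * ι k y - ι k y * ι k x - ι k ⁅x, y⁆)
    (he2 : ∀ (x : g) (u : Jg k g) (h : ι k x * (u : TensorAlgebra k g) + N x u ∈ Jg k g),
      e ⟨_, h⟩ = ι k x * e u - e u * ι k x)
    (ω : TensorAlgebra k g) (hω : ω ∈ Lam k g) (hJ : ω ∈ Jg k g)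
    (v : TensorAlgebra k g) :
    K (ω * v + (ι k (t ⟨ω, hJ⟩) * v + rD ⟨ω, hJ⟩ v)) = e ⟨ω, hJ⟩ * K v := by
  refine Submodule.span_induction
    (p := fun ω' _ => ∀ hJ' : ω' ∈ Jg k g,
      K (ω' * v + (ι k (t ⟨ω', hJ'⟩) * v + rD ⟨ω', hJ'⟩ v)) = e ⟨ω', hJ'⟩ * K v)
    ?_ ?_ ?_ ?_ hω hJ
  · rintro w ⟨x, y, rfl⟩ hJ'
    have hrω : rD ⟨ι k x * ι k y - ι k y * ι k x, hJ'⟩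
        = N x * N y - N y * N x - N ⁅x, y⁆ := by
      refine derivation_eq k g _ _ (hrD2 _) ?_ ?_
      · intro a b
        simp only [LinearMap.sub_apply, Module.End.mul_apply, hNd, map_add, map_sub]
        noncomm_ring
      · intro z
        rw [hrD1, hr1 x y hJ' z]
        simp only [LinearMap.sub_apply, Module.End.mul_apply, hN, map_sub]
    rw [ht1 x y hJ', he1 x y hJ', hrω]
    have key : (ι k x * ι k y - ι k y * ι k x) * v
        + (ι k ((d x) y - (d y) x - ⁅x, y⁆) * v
          + (N x * N y - N y * N x - N ⁅x, y⁆) v)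
        = (ι k x * (ι k y * v + N y v) + N x (ι k y * v + N y v))
          - (ι k y * (ι k x * v + N x v) + N y (ι k x * v + N x v))
          - (ι k ⁅x, y⁆ * v + N ⁅x, y⁆ v) := by
      simp only [map_sub, LinearMap.sub_apply, Module.End.mul_apply, map_add, hNd, hN]
      noncomm_ring
    rw [key, map_sub, map_sub, hK, hK, hK, hK, hK]
    noncomm_ring
  · intro hJ'
    have h0 : (⟨0, hJ'⟩ : Jg k g) = 0 := Subtype.ext rfl
    rw [h0]
    simp
  · intro a b ha hb iha ihb hJ'
    have hJa : a ∈ Jg k g := Lam_le_Jg k g ha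
    have hJb : b ∈ Jg k g := Lam_le_Jg k g hb
    have hs : (⟨a + b, hJ'⟩ : Jg k g) = ⟨a, hJa⟩ + ⟨b, hJb⟩ := Subtype.ext rfl
    have key : (a + b) * v
        + (ι k (t (⟨a, hJa⟩ + ⟨b, hJb⟩)) * v + rD (⟨a, hJa⟩ + ⟨b, hJb⟩) v)
        = (a * v + (ι k (t ⟨a, hJa⟩) * v + rD ⟨a, hJa⟩ v))
          + (b * v + (ι k (t ⟨b, hJb⟩) * v + rD ⟨b, hJb⟩ v)) := by
      rw [map_add t, map_add (ι k), map_add rD, add_mul, add_mul, LinearMap.add_apply]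
      abel
    rw [hs, key, map_add, iha hJa, ihb hJb, map_add, add_mul]
  · intro c a ha iha hJ'
    have hJa : a ∈ Jg k g := Lam_le_Jg k g ha
    have hs : (⟨c • a, hJ'⟩ : Jg k g) = c • ⟨a, hJa⟩ := Subtype.ext rfl
    have key : (c • a) * v
        + (ι k (t (c • (⟨a, hJa⟩ : Jg k g))) * v + rD (c • (⟨a, hJa⟩ : Jg k g)) v)
        = c • (a * v + (ι k (t ⟨a, hJa⟩) * v + rD ⟨a, hJa⟩ v)) := by
      rw [map_smul t, map_smul (ι k), map_smul rD, smul_mul_assoc, smul_mul_assoc,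
        LinearMap.smul_apply, smul_add, smul_add]
    rw [hs, key, map_smul, iha hJa, map_smul, smul_mul_assoc]
end
end

section
/- Lemma 4 (Equation 19): Let g be a framed Lie algebra over k. For all z ∈ g and Q ∈ J(g), κ(z ⊗ Q + ∇_z Q) = L_z ∘ κ(Q) − κ(Q) ∘ ∇_z as k-linear endomorphisms of T(g). -/
set_option linter.unusedSectionVars false

noncomputable section
open TensorAlgebra TensorProduct

variable (k : Type) [Field k] [CharZero k] (g : Type) [LieRing g] [LieAlgebra k g]

/-- The standard coproduct `Δ` of the tensor algebra, the unique algebra map with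
`Δ(x) = x ⊗̂ 1 + 1 ⊗̂ x` for `x ∈ g`. -/
def delta : TensorAlgebra k g →ₐ[k] TensorAlgebra k g ⊗[k] TensorAlgebra k g :=
  TensorAlgebra.lift k
    (((TensorProduct.mk k (TensorAlgebra k g) (TensorAlgebra k g)).flip 1
        + TensorProduct.mk k (TensorAlgebra k g) (TensorAlgebra k g) 1) ∘ₗ ι k)

/-- The right-hand side `e(u₍₁₎ ⊗ ω) ⊗ K(u₍₂₎ ⊗ v)` of the defining formula of `κ`,
written with the coproduct `Δ` instead of Sweedler notation. -/
def kappaRHS (e : Jg k g →ₗ[k] TensorAlgebra k g)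
    (K : TensorAlgebra k g →ₗ[k] TensorAlgebra k g)
    {ω : TensorAlgebra k g} (hω : ω ∈ Lam k g) (v u : TensorAlgebra k g) :
    TensorAlgebra k g :=
  TensorProduct.lift
    ((LinearMap.mul k (TensorAlgebra k g) ∘ₗ (e ∘ₗ mulJ k g hω)).compl₂
      (K ∘ₗ LinearMap.mulRight k v))
    (delta k g u)


section Helpers

variable {k g}
variable (N : g → Module.End k (TensorAlgebra k g))
variable (hNd : ∀ (x : g) (a b : TensorAlgebra k g), N x (a * b) = N x a * b + a * N x b)
variable (d : g →ₗ[k] g →ₗ[k] g)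
variable (hN : ∀ x y : g, N x (ι k y) = ι k (d x y))

include hNd in
lemma N_one (z : g) : N z (1 : TensorAlgebra k g) = 0 := by
  have h := hNd z 1 1
  simp only [one_mul, mul_one] at h
  have h2 : (0 : TensorAlgebra k g) + N z 1 = N z 1 + N z 1 := by rw [zero_add]; exact h
  exact (add_right_cancel h2).symm

include hNd hN in
lemma Lam_N (z : g) {ω : TensorAlgebra k g} (hω : ω ∈ Lam k g) : N z ω ∈ Lam k g := by
  induction hω using Submodule.span_induction with
  | mem w hw =>
      obtain ⟨x, y, rfl⟩ := hw
      have h1 : (ι k (d z x) * ι k y - ι k y * ι k (d z x)) ∈ Lam k g :=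
        Submodule.subset_span ⟨d z x, y, rfl⟩
      have h2 : (ι k x * ι k (d z y) - ι k (d z y) * ι k x) ∈ Lam k g :=
        Submodule.subset_span ⟨x, d z y, rfl⟩
      have h := add_mem h1 h2
      have heq : N z (ι k x * ι k y - ι k y * ι k x)
          = (ι k (d z x) * ι k y - ι k y * ι k (d z x))
            + (ι k x * ι k (d z y) - ι k (d z y) * ι k x) := by
        rw [map_sub, hNd, hNd, hN, hN]
        abel
      rw [heq]; exact h
  | zero => simp
  | add u v hu hv h1 h2 => rw [map_add]; exact add_mem h1 h2
  | smul a u hu h1 => rw [map_smul]; exact Submodule.smul_mem _ a h1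

lemma Jg_mul_mem (b : TensorAlgebra k g) {q : TensorAlgebra k g} (hq : q ∈ Jg k g) :
    b * q ∈ Jg k g := by
  induction hq using Submodule.span_induction with
  | mem w hw =>
      obtain ⟨a, x, y, rfl⟩ := hw
      exact Submodule.subset_span ⟨b * a, x, y, by rw [mul_assoc]⟩
  | zero => simp
  | add u v hu hv h1 h2 => simpa [mul_add] using add_mem h1 h2
  | smul a u hu h1 => simpa [mul_smul_comm] using Submodule.smul_mem _ a h1

include hNd hN in
lemma Jg_N (z : g) {q : TensorAlgebra k g} (hq : q ∈ Jg k g) : N z q ∈ Jg k g := by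
  induction hq using Submodule.span_induction with
  | mem w hw =>
      obtain ⟨a, x, y, rfl⟩ := hw
      rw [hNd]
      refine add_mem (Submodule.subset_span ⟨N z a, x, y, rfl⟩) ?_
      exact mul_mem_Jg k g (Lam_N N hNd d hN z (Submodule.subset_span ⟨x, y, rfl⟩)) a
  | zero => simp
  | add u v hu hv h1 h2 => rw [map_add]; exact add_mem h1 h2
  | smul a u hu h1 => rw [map_smul]; exact Submodule.smul_mem _ a h1

variable (k g) in
lemma delta_iota (x : g) :
    delta k g (ι k x) = ι k x ⊗ₜ[k] 1 + 1 ⊗ₜ[k] ι k x := by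
  simp [delta, TensorAlgebra.lift_ι_apply]

/-- The derivation `N z ⊗ 1 + 1 ⊗ N z` on `T(g) ⊗ T(g)`. -/
def bigN (z : g) :
    TensorAlgebra k g ⊗[k] TensorAlgebra k g →ₗ[k] TensorAlgebra k g ⊗[k] TensorAlgebra k g :=
  LinearMap.rTensor _ (N z) + LinearMap.lTensor _ (N z)

lemma bigN_tmul (z : g) (a b : TensorAlgebra k g) :
    bigN N z (a ⊗ₜ[k] b) = N z a ⊗ₜ[k] b + a ⊗ₜ[k] N z b := by
  simp [bigN]

include hNd in
lemma bigN_mul (z : g) (p q : TensorAlgebra k g ⊗[k] TensorAlgebra k g) :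
    bigN N z (p * q) = bigN N z p * q + p * bigN N z q := by
  induction p using TensorProduct.induction_on with
  | zero => simp
  | add p1 p2 h1 h2 =>
      simp only [add_mul, map_add, h1, h2]; abel
  | tmul a b =>
      induction q using TensorProduct.induction_on with
      | zero => simp
      | add q1 q2 h1 h2 =>
          simp only [mul_add, map_add, h1, h2]; abel
      | tmul c e =>
          simp only [Algebra.TensorProduct.tmul_mul_tmul, bigN_tmul, hNd,
            add_tmul, tmul_add, add_mul, mul_add, Algebra.TensorProduct.tmul_mul_tmul]
          abel

include hNd hN in
lemma delta_N (z : g) (u : TensorAlgebra k g) :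
    delta k g (N z u) = bigN N z (delta k g u) := by
  induction u using TensorAlgebra.induction with
  | algebraMap r =>
      have h1 : N z ((algebraMap k (TensorAlgebra k g)) r) = 0 := by
        rw [Algebra.algebraMap_eq_smul_one, map_smul, N_one N hNd, smul_zero]
      rw [h1, map_zero]
      rw [AlgHom.commutes]
      rw [Algebra.algebraMap_eq_smul_one, map_smul]
      rw [show (1 : TensorAlgebra k g ⊗[k] TensorAlgebra k g) = (1 : TensorAlgebra k g) ⊗ₜ[k] 1
        from rfl, bigN_tmul, N_one N hNd]
      simp
  | ι x =>
      rw [hN, delta_iota, delta_iota, map_add, bigN_tmul, bigN_tmul, hN, N_one N hNd]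
      simp
  | mul a b ha hb =>
      rw [hNd, map_add, map_mul, map_mul, ha, hb, map_mul, bigN_mul N hNd]
  | add a b ha hb => simp only [map_add, ha, hb]

end Helpers


section Key

variable {k g}
variable (N : g → Module.End k (TensorAlgebra k g))
variable (hNd : ∀ (x : g) (a b : TensorAlgebra k g), N x (a * b) = N x a * b + a * N x b)
variable (d : g →ₗ[k] g →ₗ[k] g)
variable (hN : ∀ x y : g, N x (ι k y) = ι k (d x y))

/-- `Fmap hω v (u₁ ⊗ u₂) = e(u₁ ω) * K(u₂ v)`, the bilinear core of `kappaRHS`. -/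
def Fmap (e : Jg k g →ₗ[k] TensorAlgebra k g)
    (K : TensorAlgebra k g →ₗ[k] TensorAlgebra k g)
    {ω : TensorAlgebra k g} (hω : ω ∈ Lam k g) (v : TensorAlgebra k g) :
    TensorAlgebra k g ⊗[k] TensorAlgebra k g →ₗ[k] TensorAlgebra k g :=
  TensorProduct.lift
    ((LinearMap.mul k (TensorAlgebra k g) ∘ₗ (e ∘ₗ mulJ k g hω)).compl₂
      (K ∘ₗ LinearMap.mulRight k v))

lemma kappaRHS_eq_Fmap (e : Jg k g →ₗ[k] TensorAlgebra k g)
    (K : TensorAlgebra k g →ₗ[k] TensorAlgebra k g)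
    {ω : TensorAlgebra k g} (hω : ω ∈ Lam k g) (v u : TensorAlgebra k g) :
    kappaRHS k g e K hω v u = Fmap e K hω v (delta k g u) := rfl

lemma Fmap_tmul (e : Jg k g →ₗ[k] TensorAlgebra k g)
    (K : TensorAlgebra k g →ₗ[k] TensorAlgebra k g)
    {ω : TensorAlgebra k g} (hω : ω ∈ Lam k g) (v p q : TensorAlgebra k g) :
    Fmap e K hω v (p ⊗ₜ[k] q) = e ⟨p * ω, mul_mem_Jg k g hω p⟩ * K (q * v) := rfl

include hNd hN in
lemma key_id (K : TensorAlgebra k g →ₗ[k] TensorAlgebra k g)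
    (hK : ∀ (x : g) (u : TensorAlgebra k g), K (ι k x * u + N x u) = ι k x * K u)
    (e : Jg k g →ₗ[k] TensorAlgebra k g)
    (he2 : ∀ (x : g) (u : Jg k g) (h : ι k x * (u : TensorAlgebra k g) + N x u ∈ Jg k g),
      e ⟨_, h⟩ = ι k x * e u - e u * ι k x)
    (z : g) {ω : TensorAlgebra k g} (hω : ω ∈ Lam k g) (v : TensorAlgebra k g) :
    Fmap e K hω v ∘ₗ
        (LinearMap.mulLeft k (ι k z ⊗ₜ[k] (1 : TensorAlgebra k g)
          + (1 : TensorAlgebra k g) ⊗ₜ[k] ι k z) + bigN N z)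
      + Fmap e K (Lam_N N hNd d hN z hω) v
    = LinearMap.mulLeft k (ι k z) ∘ₗ Fmap e K hω v - Fmap e K hω (N z v) := by
  apply TensorProduct.ext'
  intro p q
  simp only [LinearMap.add_apply, LinearMap.comp_apply, LinearMap.sub_apply,
    LinearMap.mulLeft_apply, bigN_tmul, add_mul, Algebra.TensorProduct.tmul_mul_tmul,
    one_mul, mul_one, map_add, Fmap_tmul]
  have hmemA : ι k z * (p * ω) + N z (p * ω) ∈ Jg k g :=
    add_mem (Jg_mul_mem _ (mul_mem_Jg k g hω p)) (Jg_N N hNd d hN z (mul_mem_Jg k g hω p))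
  have hA : e ⟨ι k z * p * ω, mul_mem_Jg k g hω (ι k z * p)⟩
      + e ⟨N z p * ω, mul_mem_Jg k g hω (N z p)⟩
      + e ⟨p * N z ω, mul_mem_Jg k g (Lam_N N hNd d hN z hω) p⟩
      = ι k z * e ⟨p * ω, mul_mem_Jg k g hω p⟩
        - e ⟨p * ω, mul_mem_Jg k g hω p⟩ * ι k z := by
    have hsum : ((⟨ι k z * p * ω, mul_mem_Jg k g hω (ι k z * p)⟩ : Jg k g)
        + ⟨N z p * ω, mul_mem_Jg k g hω (N z p)⟩
        + ⟨p * N z ω, mul_mem_Jg k g (Lam_N N hNd d hN z hω) p⟩)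
        = ⟨ι k z * (p * ω) + N z (p * ω), hmemA⟩ := by
      apply Subtype.ext
      show ι k z * p * ω + N z p * ω + p * N z ω = ι k z * (p * ω) + N z (p * ω)
      rw [hNd z p ω, mul_assoc]
      abel
    rw [← map_add, ← map_add, hsum]
    exact he2 z ⟨p * ω, mul_mem_Jg k g hω p⟩ hmemA
  have hB : K (ι k z * q * v) + K (N z q * v)
      = ι k z * K (q * v) - K (q * N z v) := by
    rw [eq_sub_iff_add_eq, ← map_add, ← map_add]
    have h0 : ι k z * q * v + N z q * v + q * N z v = ι k z * (q * v) + N z (q * v) := by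
      rw [hNd z q v, mul_assoc]; abel
    rw [h0]
    exact hK z (q * v)
  have hC : e ⟨p * N z ω, mul_mem_Jg k g (Lam_N N hNd d hN z hω) p⟩
      = (ι k z * e ⟨p * ω, mul_mem_Jg k g hω p⟩
          - e ⟨p * ω, mul_mem_Jg k g hω p⟩ * ι k z)
        - e ⟨ι k z * p * ω, mul_mem_Jg k g hω (ι k z * p)⟩
        - e ⟨N z p * ω, mul_mem_Jg k g hω (N z p)⟩ := by
    rw [← hA]; abel
  have hKB : K (N z q * v) = (ι k z * K (q * v) - K (q * N z v)) - K (ι k z * q * v) := by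
    rw [← hB]; abel
  rw [hC, hKB]
  noncomm_ring

end Key

/-- **Lemma 4 (Equation 19).** For all `z ∈ g` and `Q ∈ J(g)`,
`κ(z ⊗ Q + ∇_z Q) = L_z ∘ κ(Q) - κ(Q) ∘ ∇_z`. -/
theorem lemma_four
    (d : g →ₗ[k] g →ₗ[k] g)
    (N : g → Module.End k (TensorAlgebra k g))
    (hNd : ∀ (x : g) (a b : TensorAlgebra k g), N x (a * b) = N x a * b + a * N x b)
    (hN : ∀ x y : g, N x (ι k y) = ι k (d x y))
    (K : TensorAlgebra k g →ₗ[k] TensorAlgebra k g)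
    (hK1 : K 1 = 1)
    (hK : ∀ (x : g) (u : TensorAlgebra k g), K (ι k x * u + N x u) = ι k x * K u)
    (e : Jg k g →ₗ[k] TensorAlgebra k g)
    (he1 : ∀ (x y : g) (h : ι k x * ι k y - ι k y * ι k x ∈ Jg k g),
      e ⟨_, h⟩ = ι k x * ι k y - ι k y * ι k x - ι k ⁅x, y⁆)
    (he2 : ∀ (x : g) (u : Jg k g) (h : ι k x * (u : TensorAlgebra k g) + N x u ∈ Jg k g),
      e ⟨_, h⟩ = ι k x * e u - e u * ι k x)
    (κ : Jg k g →ₗ[k] Module.End k (TensorAlgebra k g))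
    (hκ : ∀ (u ω : TensorAlgebra k g) (hω : ω ∈ Lam k g) (h : u * ω ∈ Jg k g)
      (v : TensorAlgebra k g), κ ⟨u * ω, h⟩ v = kappaRHS k g e K hω v u)
    (z : g) (Q : Jg k g) (h : ι k z * (Q : TensorAlgebra k g) + N z Q ∈ Jg k g) :
    κ ⟨ι k z * (Q : TensorAlgebra k g) + N z Q, h⟩
      = LinearMap.mulLeft k (ι k z) ∘ₗ κ Q - κ Q ∘ₗ N z := by
  have main : ∀ (q : TensorAlgebra k g) (hq : q ∈ Jg k g)
      (hh : ι k z * q + N z q ∈ Jg k g),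
      κ ⟨ι k z * q + N z q, hh⟩
        = LinearMap.mulLeft k (ι k z) ∘ₗ κ ⟨q, hq⟩ - κ ⟨q, hq⟩ ∘ₗ N z := by
    intro q hq
    induction hq using Submodule.span_induction with
    | mem w hw =>
        obtain ⟨a, x, y, rfl⟩ := hw
        intro hh
        set ω₀ : TensorAlgebra k g := ι k x * ι k y - ι k y * ι k x with hω₀def
        have hω₀ : ω₀ ∈ Lam k g := Submodule.subset_span ⟨x, y, rfl⟩
        have hω₁ : N z ω₀ ∈ Lam k g := Lam_N N hNd d hN z hω₀
        have h1 : (ι k z * a + N z a) * ω₀ ∈ Jg k g := mul_mem_Jg k g hω₀ _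
        have h2 : a * N z ω₀ ∈ Jg k g := mul_mem_Jg k g hω₁ a
        have split : (⟨ι k z * (a * ω₀) + N z (a * ω₀), hh⟩ : Jg k g)
            = ⟨(ι k z * a + N z a) * ω₀, h1⟩ + ⟨a * N z ω₀, h2⟩ := by
          apply Subtype.ext
          show ι k z * (a * ω₀) + N z (a * ω₀) = (ι k z * a + N z a) * ω₀ + a * N z ω₀
          rw [hNd z a ω₀, add_mul, mul_assoc]
          abel
        rw [split, map_add]
        ext v
        simp only [LinearMap.add_apply, LinearMap.sub_apply, LinearMap.comp_apply,
          LinearMap.mulLeft_apply]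
        rw [hκ _ _ hω₀ h1 v, hκ _ _ hω₁ h2 v,
          hκ a ω₀ hω₀ (Submodule.subset_span ⟨a, x, y, rfl⟩) v,
          hκ a ω₀ hω₀ (Submodule.subset_span ⟨a, x, y, rfl⟩) (N z v)]
        simp only [kappaRHS_eq_Fmap]
        have hdelta : delta k g (ι k z * a + N z a)
            = (ι k z ⊗ₜ[k] (1 : TensorAlgebra k g)
                + (1 : TensorAlgebra k g) ⊗ₜ[k] ι k z) * delta k g a
              + bigN N z (delta k g a) := by
          rw [map_add, map_mul, delta_iota, delta_N N hNd d hN]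
        rw [hdelta]
        have := LinearMap.congr_fun
          (key_id N hNd d hN K hK e he2 z hω₀ v) (delta k g a)
        simpa only [LinearMap.add_apply, LinearMap.comp_apply, LinearMap.sub_apply,
          LinearMap.mulLeft_apply, map_add] using this
    | zero =>
        intro hh
        have h0 : (⟨ι k z * 0 + N z 0, hh⟩ : Jg k g) = 0 := by
          apply Subtype.ext; simp
        have h0' : (⟨(0 : TensorAlgebra k g), Submodule.zero_mem _⟩ : Jg k g) = 0 :=
          Subtype.ext rfl
        rw [h0, h0', map_zero]
        simp
    | add u v hu hv ihu ihv =>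
        intro hh
        have hhu : ι k z * u + N z u ∈ Jg k g :=
          add_mem (Jg_mul_mem _ hu) (Jg_N N hNd d hN z hu)
        have hhv : ι k z * v + N z v ∈ Jg k g :=
          add_mem (Jg_mul_mem _ hv) (Jg_N N hNd d hN z hv)
        have split : (⟨ι k z * (u + v) + N z (u + v), hh⟩ : Jg k g)
            = ⟨ι k z * u + N z u, hhu⟩ + ⟨ι k z * v + N z v, hhv⟩ := by
          apply Subtype.ext
          show ι k z * (u + v) + N z (u + v) = (ι k z * u + N z u) + (ι k z * v + N z v)
          rw [mul_add, map_add]; abel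
        have split2 : (⟨u + v, add_mem hu hv⟩ : Jg k g) = ⟨u, hu⟩ + ⟨v, hv⟩ :=
          Subtype.ext rfl
        rw [split, map_add, ihu hhu, ihv hhv, split2, map_add]
        simp only [LinearMap.comp_add, LinearMap.add_comp]
        abel
    | smul a u hu ihu =>
        intro hh
        have hhu : ι k z * u + N z u ∈ Jg k g :=
          add_mem (Jg_mul_mem _ hu) (Jg_N N hNd d hN z hu)
        have split : (⟨ι k z * (a • u) + N z (a • u), hh⟩ : Jg k g)
            = a • ⟨ι k z * u + N z u, hhu⟩ := by
          apply Subtype.ext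
          show ι k z * (a • u) + N z (a • u) = a • (ι k z * u + N z u)
          rw [mul_smul_comm, map_smul, smul_add]
        have split2 : (⟨a • u, Submodule.smul_mem _ a hu⟩ : Jg k g) = a • ⟨u, hu⟩ :=
          Subtype.ext rfl
        rw [split, map_smul, ihu hhu, split2, map_smul]
        simp only [smul_sub, LinearMap.comp_smul, LinearMap.smul_comp]
  have := main (Q : TensorAlgebra k g) Q.2 h
  simpa using this
end
end

section
/- Simplest case of the main theorem: Let g be a framed Lie algebra over k. For all x, y, v ∈ g, the element x ⊗ y ⊗ v − y ⊗ x ⊗ v + (x ⋄ y − y ⋄ x − [x, y]) ⊗ v + (x ⋄ (y ⋄ v) − y ⋄ (x ⋄ v) − [x, y] ⋄ v) of T(g) lies in the kernel of p ∘ K. -/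
set_option linter.unusedSectionVars false

noncomputable section
open TensorAlgebra TensorProduct

variable (k : Type) [Field k] [CharZero k] (g : Type) [LieRing g] [LieAlgebra k g]

/-- **Simplest case of the main theorem.** For all `x, y, v ∈ g`, the element
`x ⊗ y ⊗ v - y ⊗ x ⊗ v + t(x,y) ⊗ v + r(x,y)v` of `T(g)` lies in `ker (p ∘ K)`. -/
theorem simplest_case
    (d : g →ₗ[k] g →ₗ[k] g)
    (N : g → Module.End k (TensorAlgebra k g))
    (hNd : ∀ (x : g) (a b : TensorAlgebra k g), N x (a * b) = N x a * b + a * N x b)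
    (hN : ∀ x y : g, N x (ι k y) = ι k (d x y))
    (K : TensorAlgebra k g →ₗ[k] TensorAlgebra k g)
    (hK1 : K 1 = 1)
    (hK : ∀ (x : g) (u : TensorAlgebra k g), K (ι k x * u + N x u) = ι k x * K u)
    (x y v : g) :
    UniversalEnvelopingAlgebra.mkAlgHom k g
      (K (ι k x * ι k y * ι k v - ι k y * ι k x * ι k v
          + ι k (d x y - d y x - ⁅x, y⁆) * ι k v
          + ι k (d x (d y v) - d y (d x v) - d ⁅x, y⁆ v))) = 0 := by
  have hN1 : ∀ a : g, N a (1 : TensorAlgebra k g) = 0 := by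
    intro a
    have h := hNd a 1 1
    rw [mul_one, one_mul, mul_one] at h
    exact (left_eq_add.mp h)
  have hK0 : ∀ a : g, K (ι k a) = ι k a := by
    intro a
    have h := hK a 1
    rw [mul_one, hN1, add_zero, hK1, mul_one] at h
    exact h
  have hK2 : ∀ a b : g, K (ι k a * ι k b) = ι k a * ι k b - ι k (d a b) := by
    intro a b
    have h := hK a (ι k b)
    rw [hN, hK0, map_add, hK0] at h
    exact eq_sub_of_add_eq h
  have hK3 : ∀ a b c : g, K (ι k a * ι k b * ι k c)
      = ι k a * (ι k b * ι k c - ι k (d b c))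
        - (ι k (d a b) * ι k c - ι k (d (d a b) c)
          + (ι k b * ι k (d a c) - ι k (d b (d a c)))) := by
    intro a b c
    have h := hK a (ι k b * ι k c)
    rw [hNd, hN, hN, map_add, map_add, hK2, hK2, hK2, ← mul_assoc] at h
    exact eq_sub_of_add_eq h
  have hKE : K (ι k x * ι k y * ι k v - ι k y * ι k x * ι k v
          + ι k (d x y - d y x - ⁅x, y⁆) * ι k v
          + ι k (d x (d y v) - d y (d x v) - d ⁅x, y⁆ v))
      = ι k x * ι k y * ι k v - (ι k ⁅x, y⁆ + ι k y * ι k x) * ι k v := by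
    simp only [map_sub, map_add, LinearMap.sub_apply, sub_mul, hK3, hK2, hK0]
    noncomm_ring
  rw [hKE]
  have hrel : UniversalEnvelopingAlgebra.mkAlgHom k g (ι k ⁅x, y⁆ + ι k y * ι k x)
      = UniversalEnvelopingAlgebra.mkAlgHom k g (ι k x * ι k y) :=
    Quotient.sound <| RingCon.le_ringConGen _ _ (UniversalEnvelopingAlgebra.Rel.lie_compat x y)
  simp only [map_sub, map_mul]
  rw [hrel, map_mul, sub_self]
end
end

section
/- Existence and uniqueness of t: Let g be a framed Lie algebra over k. There exists exactly one k-linear map t : J(g) → g such that t(x ⊗ y − y ⊗ x) = x ⋄ y − y ⋄ x − [x, y] for all x, y ∈ g, and t(x ⊗ u + ∇_x u) = x ⋄ t(u) for all x ∈ g and u ∈ J(g). -/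
set_option linter.unusedSectionVars false
set_option maxHeartbeats 1000000
set_option synthInstance.maxHeartbeats 400000

noncomputable section
open TensorAlgebra TensorProduct

variable (k : Type) [Field k] [CharZero k] (g : Type) [LieRing g] [LieAlgebra k g]

/-- Filtration of the tensor algebra by word length. -/
def Vf : ℕ → Submodule k (TensorAlgebra k g)
  | 0 => Submodule.span k {1}
  | n+1 => Vf n ⊔ Submodule.span k
      {u | ∃ (x : g) (w : TensorAlgebra k g), w ∈ Vf n ∧ u = ι k x * w}

lemma Vf_le_succ (n : ℕ) : Vf k g n ≤ Vf k g (n+1) := by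
  rw [Vf]; exact le_sup_left

lemma Vf_mono : Monotone (Vf k g) := monotone_nat_of_le_succ (Vf_le_succ k g)

lemma one_mem_Vf : (1 : TensorAlgebra k g) ∈ Vf k g 0 :=
  Submodule.mem_span_singleton_self 1

lemma iota_mul_mem_Vf {n : ℕ} (x : g) {w : TensorAlgebra k g} (hw : w ∈ Vf k g n) :
    ι k x * w ∈ Vf k g (n+1) := by
  rw [Vf]
  exact Submodule.mem_sup_right (Submodule.subset_span ⟨x, w, hw, rfl⟩)

lemma Vf_rec {P : TensorAlgebra k g → Prop} (h1 : P 1) (h0 : P 0)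
    (hadd : ∀ a b, P a → P b → P (a + b)) (hsmul : ∀ (c : k) a, P a → P (c • a))
    (hmul : ∀ (x : g) a, P a → P (ι k x * a)) :
    ∀ n, ∀ a ∈ Vf k g n, P a := by
  intro n
  induction n with
  | zero =>
      intro a ha
      obtain ⟨c, rfl⟩ := Submodule.mem_span_singleton.mp ha
      exact hsmul c 1 h1
  | succ n ih =>
      intro a ha
      rw [Vf, Submodule.mem_sup] at ha
      obtain ⟨y, hy, z, hz, rfl⟩ := ha
      refine hadd _ _ (ih _ hy) ?_
      induction hz using Submodule.span_induction with
      | mem w hw => obtain ⟨x, w', hw', rfl⟩ := hw; exact hmul x w' (ih _ hw')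
      | zero => exact h0
      | add u v _ _ hu hv => exact hadd _ _ hu hv
      | smul c u _ hu => exact hsmul c u hu

lemma Vf_mul : ∀ (m n : ℕ), ∀ a ∈ Vf k g m, ∀ b ∈ Vf k g n, a * b ∈ Vf k g (m + n) := by
  intro m
  induction m with
  | zero =>
      intro n a ha b hb
      obtain ⟨c, rfl⟩ := Submodule.mem_span_singleton.mp ha
      simpa [smul_mul_assoc] using (Vf k g (0+n)).smul_mem c (by simpa using hb)
  | succ m ih =>
      intro n a ha b hb
      have key : Vf k g (m+1) ≤
          Submodule.comap (LinearMap.mulRight k b) (Vf k g (m+1+n)) := by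
        rw [Vf]
        apply sup_le
        · intro a' ha'
          simp only [Submodule.mem_comap, LinearMap.mulRight_apply]
          exact Vf_mono k g (by omega) (ih n a' ha' b hb)
        · rw [Submodule.span_le]
          rintro u ⟨x, w, hw, rfl⟩
          simp only [SetLike.mem_coe, Submodule.mem_comap, LinearMap.mulRight_apply]
          rw [mul_assoc]
          have : m + 1 + n = (m + n) + 1 := by omega
          rw [this]
          exact iota_mul_mem_Vf k g x (ih n w hw b hb)
      exact key ha

lemma exists_Vf (a : TensorAlgebra k g) : ∃ n, a ∈ Vf k g n := by
  induction a using TensorAlgebra.induction with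
  | algebraMap r =>
      exact ⟨0, by simpa [Algebra.algebraMap_eq_smul_one] using
        (Vf k g 0).smul_mem r (one_mem_Vf k g)⟩
  | ι x => exact ⟨1, by simpa using iota_mul_mem_Vf k g x (one_mem_Vf k g)⟩
  | mul a b ha hb =>
      obtain ⟨m, hm⟩ := ha; obtain ⟨n, hn⟩ := hb
      exact ⟨m+n, Vf_mul k g m n a hm b hn⟩
  | add a b ha hb =>
      obtain ⟨m, hm⟩ := ha; obtain ⟨n, hn⟩ := hb
      exact ⟨m+n, (Vf k g (m+n)).add_mem (Vf_mono k g (by omega) hm)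
        (Vf_mono k g (by omega) hn)⟩


/-- Left multiplication `x ⊗ a ↦ ι x * a`. -/
def muT : g ⊗[k] TensorAlgebra k g →ₗ[k] TensorAlgebra k g :=
  TensorProduct.lift ((LinearMap.mul k (TensorAlgebra k g)).comp (ι k))

@[simp] lemma muT_tmul (x : g) (a : TensorAlgebra k g) : muT k g (x ⊗ₜ a) = ι k x * a := rfl

/-- Auxiliary representation used to build a left inverse of `muT`. -/
def mAux : g →ₗ[k] Module.End k (k × (g ⊗[k] TensorAlgebra k g)) :=
  (LinearMap.llcomp k (k × (g ⊗[k] TensorAlgebra k g)) (g ⊗[k] TensorAlgebra k g)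
      (k × (g ⊗[k] TensorAlgebra k g)) (LinearMap.inr k k (g ⊗[k] TensorAlgebra k g))) ∘ₗ
  ((LinearMap.llcomp k (k × (g ⊗[k] TensorAlgebra k g)) k
        (g ⊗[k] TensorAlgebra k g)).flip
      (LinearMap.fst k k (g ⊗[k] TensorAlgebra k g)) ∘ₗ
      (LinearMap.ringLmapEquivSelf k k (g ⊗[k] TensorAlgebra k g)).symm.toLinearMap ∘ₗ
      ((TensorProduct.mk k g (TensorAlgebra k g)).flip 1)
    + (LinearMap.llcomp k (k × (g ⊗[k] TensorAlgebra k g)) (TensorAlgebra k g)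
        (g ⊗[k] TensorAlgebra k g)).flip
        ((muT k g) ∘ₗ (LinearMap.snd k k (g ⊗[k] TensorAlgebra k g))) ∘ₗ
      (TensorProduct.mk k g (TensorAlgebra k g)))

@[simp] lemma mAux_apply (x : g) (c : k) (w : g ⊗[k] TensorAlgebra k g) :
    mAux k g x (c, w) = (0, c • (x ⊗ₜ[k] (1 : TensorAlgebra k g)) + x ⊗ₜ muT k g w) := by
  simp [mAux, LinearMap.prod_apply, LinearMap.toSpanSingleton_apply]

/-- Extraction of the first tensor factor. -/
def Pmap : TensorAlgebra k g →ₗ[k] g ⊗[k] TensorAlgebra k g :=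
  (LinearMap.snd k k _) ∘ₗ
    (LinearMap.applyₗ ((1:k), (0 : g ⊗[k] TensorAlgebra k g))) ∘ₗ
      (lift k (mAux k g)).toLinearMap

def e1 : TensorAlgebra k g →ₗ[k] k :=
  (LinearMap.fst k k _) ∘ₗ
    (LinearMap.applyₗ ((1:k), (0 : g ⊗[k] TensorAlgebra k g))) ∘ₗ
      (lift k (mAux k g)).toLinearMap

def Qmap : TensorAlgebra k g →ₗ[k] TensorAlgebra k g :=
  (LinearMap.toSpanSingleton k _ (1 : TensorAlgebra k g)) ∘ₗ e1 k g + (muT k g) ∘ₗ Pmap k g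

lemma Pmap_apply (a : TensorAlgebra k g) :
    Pmap k g a = (lift k (mAux k g) a ((1:k), 0)).2 := rfl
lemma e1_apply (a : TensorAlgebra k g) :
    e1 k g a = (lift k (mAux k g) a ((1:k), 0)).1 := rfl

@[simp] lemma Pmap_one : Pmap k g 1 = 0 := by simp [Pmap_apply]
@[simp] lemma e1_one : e1 k g 1 = 1 := by simp [e1_apply]

lemma Qmap_apply (a : TensorAlgebra k g) :
    Qmap k g a = e1 k g a • 1 + muT k g (Pmap k g a) := rfl

lemma H_iota_mul (x : g) (a : TensorAlgebra k g) :
    lift k (mAux k g) (ι k x * a) ((1:k), 0) =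
      (0, e1 k g a • (x ⊗ₜ[k] (1 : TensorAlgebra k g)) + x ⊗ₜ muT k g (Pmap k g a)) := by
  have h1 : lift k (mAux k g) (ι k x) = mAux k g x := lift_ι_apply _ _
  have h2 : lift k (mAux k g) a ((1:k), 0) = (e1 k g a, Pmap k g a) := rfl
  rw [map_mul, Module.End.mul_apply, h1, h2, mAux_apply]

lemma Pmap_iota_mul (x : g) (a : TensorAlgebra k g) :
    Pmap k g (ι k x * a) = x ⊗ₜ Qmap k g a := by
  rw [Pmap_apply, H_iota_mul, Qmap_apply]
  simp [TensorProduct.tmul_add, TensorProduct.tmul_smul]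

lemma e1_iota_mul (x : g) (a : TensorAlgebra k g) : e1 k g (ι k x * a) = 0 := by
  rw [e1_apply, H_iota_mul]

lemma Qmap_iota_mul (x : g) (a : TensorAlgebra k g) :
    Qmap k g (ι k x * a) = ι k x * Qmap k g a := by
  rw [Qmap_apply, e1_iota_mul, Pmap_iota_mul]
  simp

@[simp] lemma Qmap_eq_id (a : TensorAlgebra k g) : Qmap k g a = a := by
  obtain ⟨n, hn⟩ := exists_Vf k g a
  refine Vf_rec k g (P := fun b => Qmap k g b = b) ?_ ?_ ?_ ?_ ?_ n a hn
  · simp [Qmap_apply]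
  · simp
  · intro a b ha hb; rw [map_add, ha, hb]
  · intro c a ha; rw [map_smul, ha]
  · intro x a ha; rw [Qmap_iota_mul, ha]

lemma Pmap_muT (s : g ⊗[k] TensorAlgebra k g) : Pmap k g (muT k g s) = s := by
  induction s with
  | zero => simp
  | tmul x a => rw [muT_tmul, Pmap_iota_mul, Qmap_eq_id]
  | add u v hu hv => rw [map_add, map_add, hu, hv]

lemma muT_inj : Function.Injective (muT k g) :=
  Function.LeftInverse.injective (Pmap_muT k g)

/-- The augmentation as a linear map. -/
def epsl : TensorAlgebra k g →ₗ[k] k := (algebraMapInv : TensorAlgebra k g →ₐ[k] k).toLinearMap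

@[simp] lemma epsl_one : epsl k g 1 = 1 := by simp [epsl]

/-- Extraction of the degree-one coefficient of the first letter. -/
def pi1 : TensorAlgebra k g →ₗ[k] g :=
  (TensorProduct.rid k g).toLinearMap ∘ₗ (LinearMap.lTensor g (epsl k g)) ∘ₗ Pmap k g

@[simp] lemma pi1_iota (x : g) : pi1 k g (ι k x) = x := by
  have : Pmap k g (ι k x) = x ⊗ₜ (1 : TensorAlgebra k g) := by
    rw [← mul_one (ι k x), Pmap_iota_mul, Qmap_eq_id]
  simp [pi1, this]

/-- Extraction of the first two letters. -/
def E2 : TensorAlgebra k g →ₗ[k] g ⊗[k] g :=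
  (LinearMap.lTensor g (pi1 k g)) ∘ₗ Pmap k g

lemma E2_iota_iota (x y : g) : E2 k g (ι k x * ι k y) = x ⊗ₜ y := by
  rw [E2, LinearMap.comp_apply, Pmap_iota_mul, Qmap_eq_id]
  simp

/-- `x ⊗ y ↦ ι x * ι y`. -/
def Gmap : g ⊗[k] g →ₗ[k] TensorAlgebra k g :=
  TensorProduct.lift (((LinearMap.mul k (TensorAlgebra k g)).comp (ι k)).compl₂ (ι k))

@[simp] lemma Gmap_tmul (x y : g) : Gmap k g (x ⊗ₜ y) = ι k x * ι k y := rfl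

lemma G_E2_of_mem : ∀ w ∈ Lam k g, Gmap k g (E2 k g w) = w := by
  intro w hw
  induction hw using Submodule.span_induction with
  | mem w hw =>
      obtain ⟨x, y, rfl⟩ := hw
      rw [map_sub, E2_iota_iota, E2_iota_iota, map_sub, Gmap_tmul, Gmap_tmul]
  | zero => simp
  | add u v _ _ hu hv => rw [map_add, map_add, hu, hv]
  | smul c u _ hu => rw [map_smul, map_smul, hu]

/-- `Λ(g) → g ⊗ g`. -/
def jmap : ↥(Lam k g) →ₗ[k] g ⊗[k] g := E2 k g ∘ₗ (Lam k g).subtype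

lemma jmap_inj : Function.Injective (jmap k g) := by
  intro w w' h
  have := congrArg (Gmap k g) h
  simp only [jmap, LinearMap.comp_apply, Submodule.subtype_apply] at this
  rw [G_E2_of_mem k g _ w.2, G_E2_of_mem k g _ w'.2] at this
  exact Subtype.ext this

lemma jmap_gen (x y : g) (h : ι k x * ι k y - ι k y * ι k x ∈ Lam k g) :
    jmap k g ⟨_, h⟩ = x ⊗ₜ y - y ⊗ₜ x := by
  rw [jmap, LinearMap.comp_apply]
  show E2 k g (ι k x * ι k y - ι k y * ι k x) = _
  rw [map_sub, E2_iota_iota, E2_iota_iota]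

/-- `(x ⊗ y) ⊗ a ↦ ι x * ι y * a`. -/
def mu2 : (g ⊗[k] g) ⊗[k] TensorAlgebra k g →ₗ[k] TensorAlgebra k g :=
  muT k g ∘ₗ (LinearMap.lTensor g (muT k g)) ∘ₗ (TensorProduct.assoc k g g _).toLinearMap

lemma mu2_inj : Function.Injective (mu2 k g) := by
  have h := (muT_inj k g).comp
    ((Module.Flat.lTensor_preserves_injective_linearMap (M := g) _ (muT_inj k g)).comp
      (TensorProduct.assoc k g g (TensorAlgebra k g)).injective)
  simpa [mu2, LinearMap.coe_comp, Function.comp_def] using h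

/-- `ω ⊗ a ↦ ω * a` for `ω ∈ Λ(g)`. -/
def nug : ↥(Lam k g) ⊗[k] TensorAlgebra k g →ₗ[k] TensorAlgebra k g :=
  TensorProduct.lift ((LinearMap.mul k (TensorAlgebra k g)).comp (Lam k g).subtype)

@[simp] lemma nug_tmul (w : ↥(Lam k g)) (a : TensorAlgebra k g) :
    nug k g (w ⊗ₜ a) = (w : TensorAlgebra k g) * a := rfl

lemma nug_eq : nug k g = mu2 k g ∘ₗ (LinearMap.rTensor (TensorAlgebra k g) (jmap k g)) := by
  apply TensorProduct.ext'
  rintro ⟨w, hw⟩ a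
  rw [LinearMap.comp_apply, LinearMap.rTensor_tmul, nug_tmul]
  show w * a = mu2 k g (jmap k g ⟨w, hw⟩ ⊗ₜ a)
  have key : ∀ w' ∈ Lam k g, mu2 k g (E2 k g w' ⊗ₜ a) = w' * a := by
    intro w' hw'
    induction hw' using Submodule.span_induction with
    | mem u hu =>
        obtain ⟨x, y, rfl⟩ := hu
        rw [map_sub, E2_iota_iota, E2_iota_iota, TensorProduct.sub_tmul, map_sub]
        have h1 : mu2 k g ((x ⊗ₜ y) ⊗ₜ a) = ι k x * (ι k y * a) := rfl
        have h2 : mu2 k g ((y ⊗ₜ x) ⊗ₜ a) = ι k y * (ι k x * a) := rfl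
        rw [h1, h2, sub_mul, mul_assoc, mul_assoc]
    | zero => simp
    | add u v _ _ hu hv => rw [map_add, TensorProduct.add_tmul, map_add, hu, hv, add_mul]
    | smul c u _ hu =>
        rw [map_smul, ← TensorProduct.smul_tmul', map_smul, hu, smul_mul_assoc]
  exact (key w hw).symm

lemma nug_inj : Function.Injective (nug k g) := by
  rw [nug_eq]
  exact (mu2_inj k g).comp
    (Module.Flat.rTensor_preserves_injective_linearMap _ (jmap_inj k g))

/-- The reversal anti-automorphism of the tensor algebra. -/
def revA : TensorAlgebra k g →ₐ[k] (TensorAlgebra k g)ᵐᵒᵖ :=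
  lift k ((MulOpposite.opLinearEquiv k).toLinearMap ∘ₗ ι k)

def rev : TensorAlgebra k g →ₗ[k] TensorAlgebra k g :=
  (MulOpposite.opLinearEquiv k (M := TensorAlgebra k g)).symm.toLinearMap ∘ₗ
    (revA k g).toLinearMap

@[simp] lemma rev_iota (x : g) : rev k g (ι k x) = ι k x := by
  simp [rev, revA, lift_ι_apply]

@[simp] lemma rev_one : rev k g 1 = 1 := by simp [rev]

lemma rev_mul (a b : TensorAlgebra k g) : rev k g (a * b) = rev k g b * rev k g a := by
  simp [rev, map_mul]

lemma rev_algebraMap (r : k) : rev k g (algebraMap k _ r) = algebraMap k _ r := by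
  simp [Algebra.algebraMap_eq_smul_one, map_smul]

lemma rev_rev (a : TensorAlgebra k g) : rev k g (rev k g a) = a := by
  induction a using TensorAlgebra.induction with
  | algebraMap r => rw [rev_algebraMap, rev_algebraMap]
  | ι x => rw [rev_iota, rev_iota]
  | mul a b ha hb => rw [rev_mul, rev_mul, ha, hb]
  | add a b ha hb => rw [map_add, map_add, ha, hb]

lemma rev_inj : Function.Injective (rev k g) :=
  Function.LeftInverse.injective (rev_rev k g)

lemma rev_mem_Lam : ∀ w ∈ Lam k g, rev k g w ∈ Lam k g := by
  intro w hw
  induction hw using Submodule.span_induction with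
  | mem u hu =>
      obtain ⟨x, y, rfl⟩ := hu
      rw [map_sub, rev_mul, rev_mul, rev_iota, rev_iota]
      exact Submodule.subset_span ⟨y, x, rfl⟩
  | zero => simp
  | add u v _ _ hu hv => rw [map_add]; exact (Lam k g).add_mem hu hv
  | smul c u _ hu => rw [map_smul]; exact (Lam k g).smul_mem c hu

def revLam : ↥(Lam k g) →ₗ[k] ↥(Lam k g) :=
  LinearMap.codRestrict (Lam k g) (rev k g ∘ₗ (Lam k g).subtype)
    (fun w => rev_mem_Lam k g _ w.2)

@[simp] lemma revLam_coe (w : ↥(Lam k g)) :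
    (revLam k g w : TensorAlgebra k g) = rev k g w := rfl

lemma revLam_inj : Function.Injective (revLam k g) := by
  intro w w' h
  have : rev k g (w : TensorAlgebra k g) = rev k g (w' : TensorAlgebra k g) := by
    rw [← revLam_coe, ← revLam_coe, h]
  exact Subtype.ext (rev_inj k g this)

/-- `a ⊗ ω ↦ a * ω` for `ω ∈ Λ(g)`. -/
def muL : TensorAlgebra k g ⊗[k] ↥(Lam k g) →ₗ[k] TensorAlgebra k g :=
  TensorProduct.lift ((LinearMap.mul k (TensorAlgebra k g)).compl₂ (Lam k g).subtype)

@[simp] lemma muL_tmul (a : TensorAlgebra k g) (w : ↥(Lam k g)) :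
    muL k g (a ⊗ₜ w) = a * (w : TensorAlgebra k g) := rfl

lemma rev_muL : (rev k g) ∘ₗ muL k g =
    nug k g ∘ₗ (TensorProduct.map (revLam k g) (rev k g)) ∘ₗ
      (TensorProduct.comm k _ _).toLinearMap := by
  apply TensorProduct.ext'
  intro a w
  simp only [LinearMap.comp_apply, LinearEquiv.coe_coe, TensorProduct.comm_tmul,
    TensorProduct.map_tmul, muL_tmul, nug_tmul, revLam_coe]
  exact rev_mul k g a w

lemma map_revLam_rev_inj :
    Function.Injective (TensorProduct.map (revLam k g) (rev k g)) := by
  have heq : TensorProduct.map (revLam k g) (rev k g) =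
      (LinearMap.rTensor _ (revLam k g)) ∘ₗ (LinearMap.lTensor _ (rev k g)) := by
    apply TensorProduct.ext'
    intro w a
    simp
  rw [heq, LinearMap.coe_comp]
  exact (Module.Flat.rTensor_preserves_injective_linearMap _ (revLam_inj k g)).comp
    (Module.Flat.lTensor_preserves_injective_linearMap _ (rev_inj k g))

lemma muL_inj : Function.Injective (muL k g) := by
  intro s s' h
  have h2 : (rev k g ∘ₗ muL k g) s = (rev k g ∘ₗ muL k g) s' := by
    simp only [LinearMap.comp_apply, h]
  rw [rev_muL] at h2
  simp only [LinearMap.comp_apply, LinearEquiv.coe_coe] at h2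
  have h3 := map_revLam_rev_inj k g (nug_inj k g h2)
  exact (TensorProduct.comm k _ _).injective h3

section withN

variable (d : g →ₗ[k] g →ₗ[k] g)
variable (N : g → Module.End k (TensorAlgebra k g))
variable (hNd : ∀ (x : g) (a b : TensorAlgebra k g), N x (a * b) = N x a * b + a * N x b)
variable (hN : ∀ x y : g, N x (ι k y) = ι k (d x y))

include d N hNd hN

lemma N_one_s15 (x : g) : N x 1 = 0 := by
  have h := hNd x 1 1
  rw [mul_one, mul_one, one_mul] at h
  exact (left_eq_add.mp h)

lemma N_algebraMap (x : g) (r : k) : N x (algebraMap k _ r) = 0 := by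
  rw [Algebra.algebraMap_eq_smul_one, map_smul, N_one_s15 k g d N hNd hN, smul_zero]

lemma N_Lam_s15 (x : g) : ∀ w ∈ Lam k g, N x w ∈ Lam k g := by
  intro w hw
  induction hw using Submodule.span_induction with
  | mem u hu =>
      obtain ⟨a, b, rfl⟩ := hu
      rw [map_sub, hNd, hNd, hN, hN]
      have : ι k (d x a) * ι k b + ι k a * ι k (d x b) -
          (ι k (d x b) * ι k a + ι k b * ι k (d x a)) =
          (ι k (d x a) * ι k b - ι k b * ι k (d x a)) +
          (ι k a * ι k (d x b) - ι k (d x b) * ι k a) := by abel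
      rw [this]
      exact (Lam k g).add_mem (Submodule.subset_span ⟨d x a, b, rfl⟩)
        (Submodule.subset_span ⟨a, d x b, rfl⟩)
  | zero => simp
  | add u v _ _ hu hv => rw [map_add]; exact (Lam k g).add_mem hu hv
  | smul c u _ hu => rw [map_smul]; exact (Lam k g).smul_mem c hu

lemma N_Vf (x : g) : ∀ n, ∀ a ∈ Vf k g n, N x a ∈ Vf k g n := by
  intro n
  induction n with
  | zero =>
      intro a ha
      obtain ⟨c, rfl⟩ := Submodule.mem_span_singleton.mp ha
      rw [map_smul, N_one_s15 k g d N hNd hN, smul_zero]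
      exact (Vf k g 0).zero_mem
  | succ n ih =>
      intro a ha
      have key : Vf k g (n+1) ≤ Submodule.comap (N x) (Vf k g (n+1)) := by
        rw [Vf]
        apply sup_le
        · intro a' ha'
          exact Submodule.mem_comap.mpr (Vf_le_succ k g n (ih a' ha'))
        · rw [Submodule.span_le]
          rintro u ⟨y, w, hw, rfl⟩
          simp only [SetLike.mem_coe, Submodule.mem_comap]
          rw [hNd, hN]
          exact (Vf k g (n+1)).add_mem (iota_mul_mem_Vf k g _ hw)
            (iota_mul_mem_Vf k g _ (ih w hw))
      exact key ha

lemma N_addx (x y : g) : N (x + y) = N x + N y := by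
  apply LinearMap.ext
  intro a
  induction a using TensorAlgebra.induction with
  | algebraMap r =>
      rw [LinearMap.add_apply, N_algebraMap k g d N hNd hN, N_algebraMap k g d N hNd hN,
        N_algebraMap k g d N hNd hN, add_zero]
  | ι z => rw [LinearMap.add_apply, hN, hN, hN, map_add, LinearMap.add_apply, map_add]
  | mul a b ha hb =>
      rw [LinearMap.add_apply] at ha hb ⊢
      rw [hNd, hNd, hNd, ha, hb, add_mul, mul_add]
      abel
  | add a b ha hb =>
      rw [LinearMap.add_apply] at ha hb ⊢
      rw [map_add, map_add, map_add, ha, hb]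
      abel

lemma N_smulx (c : k) (x : g) : N (c • x) = c • N x := by
  apply LinearMap.ext
  intro a
  induction a using TensorAlgebra.induction with
  | algebraMap r =>
      rw [LinearMap.smul_apply, N_algebraMap k g d N hNd hN, N_algebraMap k g d N hNd hN, smul_zero]
  | ι z => rw [LinearMap.smul_apply, hN, hN, map_smul, LinearMap.smul_apply, map_smul]
  | mul a b ha hb =>
      rw [LinearMap.smul_apply] at ha hb ⊢
      rw [hNd, hNd, ha, hb, smul_add, smul_mul_assoc, mul_smul_comm]
  | add a b ha hb =>
      rw [LinearMap.smul_apply] at ha hb ⊢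
      rw [map_add, map_add, ha, hb, smul_add]

/-- The twisted action `ξ_x = L_{ι x} + ∇_x`. -/
def xiL : g →ₗ[k] Module.End k (TensorAlgebra k g) where
  toFun x := LinearMap.mulLeft k (ι k x) + N x
  map_add' x y := by
    apply LinearMap.ext
    intro a
    show ι k (x+y) * a + N (x+y) a = (ι k x * a + N x a) + (ι k y * a + N y a)
    rw [N_addx k g d N hNd hN, map_add, LinearMap.add_apply, add_mul]
    abel
  map_smul' c x := by
    apply LinearMap.ext
    intro a
    show ι k (c • x) * a + N (c • x) a = c • (ι k x * a + N x a)
    rw [N_smulx k g d N hNd hN, map_smul, LinearMap.smul_apply, smul_mul_assoc, smul_add]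

lemma xiL_apply (x : g) (a : TensorAlgebra k g) :
    xiL k g d N hNd hN x a = ι k x * a + N x a := rfl

/-- The algebra morphism `Ξ : T(g) → End(T(g))`. -/
def XiA : TensorAlgebra k g →ₐ[k] Module.End k (TensorAlgebra k g) :=
  lift k (xiL k g d N hNd hN)

lemma XiA_iota (x : g) : XiA k g d N hNd hN (ι k x) = xiL k g d N hNd hN x :=
  lift_ι_apply _ _

end withN

/-- Filtration of `T(g) ⊗ Λ(g)`. -/
def Df (n : ℕ) : Submodule k (TensorAlgebra k g ⊗[k] ↥(Lam k g)) :=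
  Submodule.span k {s | ∃ a ∈ Vf k g n, ∃ ω : ↥(Lam k g), s = a ⊗ₜ ω}

lemma Df_mono {n m : ℕ} (h : n ≤ m) : Df k g n ≤ Df k g m := by
  apply Submodule.span_mono
  rintro s ⟨a, ha, ω, rfl⟩
  exact ⟨a, Vf_mono k g h ha, ω, rfl⟩

lemma exists_Df (s : TensorAlgebra k g ⊗[k] ↥(Lam k g)) : ∃ n, s ∈ Df k g n := by
  induction s with
  | zero => exact ⟨0, (Df k g 0).zero_mem⟩
  | tmul a ω =>
      obtain ⟨n, hn⟩ := exists_Vf k g a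
      exact ⟨n, Submodule.subset_span ⟨a, hn, ω, rfl⟩⟩
  | add u v hu hv =>
      obtain ⟨n, hn⟩ := hu; obtain ⟨m, hm⟩ := hv
      exact ⟨n + m, (Df k g (n+m)).add_mem (Df_mono k g (by omega) hn)
        (Df_mono k g (by omega) hm)⟩

lemma mulIota_Jg (x : g) : ∀ u ∈ Jg k g, ι k x * u ∈ Jg k g := by
  intro u hu
  induction hu using Submodule.span_induction with
  | mem w hw =>
      obtain ⟨b, a, c, rfl⟩ := hw
      rw [← mul_assoc]
      exact Submodule.subset_span ⟨ι k x * b, a, c, rfl⟩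
  | zero => simp
  | add u v _ _ hu hv => rw [mul_add]; exact (Jg k g).add_mem hu hv
  | smul c u _ hu => rw [mul_smul_comm]; exact (Jg k g).smul_mem c hu

lemma mulIota_muL_Df (x : g) (n : ℕ) :
    ∀ s ∈ Df k g n, ι k x * muL k g s ∈ Submodule.map (muL k g) (Df k g (n+1)) := by
  intro s hs
  induction hs using Submodule.span_induction with
  | mem u hu =>
      obtain ⟨a, ha, ω, rfl⟩ := hu
      refine ⟨(ι k x * a) ⊗ₜ ω, Submodule.subset_span ⟨_, iota_mul_mem_Vf k g x ha, ω, rfl⟩, ?_⟩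
      rw [muL_tmul, muL_tmul, mul_assoc]
  | zero => rw [map_zero, mul_zero]; exact Submodule.zero_mem _
  | add u v _ _ hu hv => rw [map_add, mul_add]; exact Submodule.add_mem _ hu hv
  | smul c u _ hu => rw [map_smul, mul_smul_comm]; exact Submodule.smul_mem _ c hu

/-- The Lie bracket as a bilinear map. -/
def brk : g →ₗ[k] g →ₗ[k] g where
  toFun x :=
    { toFun := fun y => ⁅x, y⁆
      map_add' := lie_add x
      map_smul' := fun c y => by simp [lie_smul] }
  map_add' x y := by ext z; simp [add_lie]
  map_smul' c x := by ext z; simp [smul_lie]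

@[simp] lemma brk_apply (x y : g) : brk k g x y = ⁅x, y⁆ := rfl

section withN2

variable (d : g →ₗ[k] g →ₗ[k] g)
variable (N : g → Module.End k (TensorAlgebra k g))
variable (hNd : ∀ (x : g) (a b : TensorAlgebra k g), N x (a * b) = N x a * b + a * N x b)
variable (hN : ∀ x y : g, N x (ι k y) = ι k (d x y))

include d N hNd hN

def CmapBil : TensorAlgebra k g →ₗ[k] ↥(Lam k g) →ₗ[k] TensorAlgebra k g where
  toFun a := (XiA k g d N hNd hN a) ∘ₗ (Lam k g).subtype
  map_add' a b := by simp only [map_add, LinearMap.add_comp]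
  map_smul' c a := by simp only [map_smul, LinearMap.smul_comp, RingHom.id_apply]

/-- The comparison map `a ⊗ ω ↦ Ξ(a)(ω)`. -/
def Cmap : TensorAlgebra k g ⊗[k] ↥(Lam k g) →ₗ[k] TensorAlgebra k g :=
  TensorProduct.lift (CmapBil k g d N hNd hN)

lemma Cmap_tmul (a : TensorAlgebra k g) (ω : ↥(Lam k g)) :
    Cmap k g d N hNd hN (a ⊗ₜ ω) = XiA k g d N hNd hN a (ω : TensorAlgebra k g) := rfl

lemma Cmap_one_tmul (ω : ↥(Lam k g)) :
    Cmap k g d N hNd hN ((1 : TensorAlgebra k g) ⊗ₜ ω) = (ω : TensorAlgebra k g) := by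
  rw [Cmap_tmul, map_one, Module.End.one_apply]

lemma Cmap_iota_mul (x : g) (a : TensorAlgebra k g) (ω : ↥(Lam k g)) :
    Cmap k g d N hNd hN ((ι k x * a) ⊗ₜ ω) =
      ι k x * Cmap k g d N hNd hN (a ⊗ₜ ω) + N x (Cmap k g d N hNd hN (a ⊗ₜ ω)) := by
  rw [Cmap_tmul, map_mul, Module.End.mul_apply, XiA_iota, xiL_apply, Cmap_tmul]

lemma Cmap_rT (x : g) (s : TensorAlgebra k g ⊗[k] ↥(Lam k g)) :
    Cmap k g d N hNd hN (LinearMap.rTensor _ (LinearMap.mulLeft k (ι k x)) s) =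
      ι k x * Cmap k g d N hNd hN s + N x (Cmap k g d N hNd hN s) := by
  induction s with
  | zero => simp
  | tmul a ω =>
      rw [LinearMap.rTensor_tmul, LinearMap.mulLeft_apply, Cmap_iota_mul]
  | add u v hu hv =>
      rw [map_add, map_add, hu, hv, map_add, map_add, mul_add]
      abel

lemma N_muL_Df (x : g) (n : ℕ) :
    ∀ s ∈ Df k g n, N x (muL k g s) ∈ Submodule.map (muL k g) (Df k g n) := by
  intro s hs
  induction hs using Submodule.span_induction with
  | mem u hu =>
      obtain ⟨a, ha, ω, rfl⟩ := hu
      rw [muL_tmul, hNd]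
      refine Submodule.add_mem _ ?_ ?_
      · exact ⟨(N x a) ⊗ₜ ω,
          Submodule.subset_span ⟨_, N_Vf k g d N hNd hN x n a ha, ω, rfl⟩, rfl⟩
      · exact ⟨a ⊗ₜ ⟨N x (ω : TensorAlgebra k g), N_Lam_s15 k g d N hNd hN x _ ω.2⟩,
          Submodule.subset_span ⟨a, ha, _, rfl⟩, rfl⟩
  | zero => rw [map_zero, map_zero]; exact Submodule.zero_mem _
  | add u v _ _ hu hv => rw [map_add, map_add]; exact Submodule.add_mem _ hu hv
  | smul c u _ hu => rw [map_smul, map_smul]; exact Submodule.smul_mem _ c hu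

lemma D0_Cmap : ∀ s ∈ Df k g 0, Cmap k g d N hNd hN s = muL k g s := by
  intro s hs
  induction hs using Submodule.span_induction with
  | mem u hu =>
      obtain ⟨a, ha, ω, rfl⟩ := hu
      obtain ⟨c, rfl⟩ := Submodule.mem_span_singleton.mp ha
      rw [← TensorProduct.smul_tmul', map_smul, map_smul, Cmap_one_tmul, muL_tmul, one_mul]
  | zero => rw [map_zero, map_zero]
  | add u v _ _ hu hv => rw [map_add, map_add, hu, hv]
  | smul c u _ hu => rw [map_smul, map_smul, hu]

/-- The "difference at fixed `ω`" linear map. -/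
def linD (ω : ↥(Lam k g)) : TensorAlgebra k g →ₗ[k] TensorAlgebra k g :=
  (Cmap k g d N hNd hN - muL k g) ∘ₗ
    ((TensorProduct.mk k (TensorAlgebra k g) ↥(Lam k g)).flip ω)

lemma linD_apply (ω : ↥(Lam k g)) (a : TensorAlgebra k g) :
    linD k g d N hNd hN ω a =
      Cmap k g d N hNd hN (a ⊗ₜ ω) - muL k g (a ⊗ₜ ω) := rfl

lemma Kgenstep (n : ℕ) (x : g) (w : TensorAlgebra k g) (hw : w ∈ Vf k g (n+1))
    (ω : ↥(Lam k g))
    (hdiffw : Cmap k g d N hNd hN (w ⊗ₜ ω) - muL k g (w ⊗ₜ ω) ∈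
      Submodule.map (muL k g) (Df k g n)) :
    Cmap k g d N hNd hN ((ι k x * w) ⊗ₜ ω) - muL k g ((ι k x * w) ⊗ₜ ω) ∈
      Submodule.map (muL k g) (Df k g (n+1)) := by
  obtain ⟨s', hs', hmu⟩ := hdiffw
  have h2 : muL k g ((ι k x * w) ⊗ₜ ω) = ι k x * muL k g (w ⊗ₜ ω) := by
    rw [muL_tmul, muL_tmul, mul_assoc]
  have key : Cmap k g d N hNd hN ((ι k x * w) ⊗ₜ ω) - muL k g ((ι k x * w) ⊗ₜ ω) =
      ι k x * muL k g s' + N x (Cmap k g d N hNd hN (w ⊗ₜ ω)) := by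
    rw [Cmap_iota_mul, h2, hmu, mul_sub]
    abel
  have hC : Cmap k g d N hNd hN (w ⊗ₜ ω) = muL k g (w ⊗ₜ ω + s') := by
    rw [map_add, hmu]
    abel
  rw [key, hC]
  refine Submodule.add_mem _ ?_ ?_
  · exact mulIota_muL_Df k g x n s' hs'
  · refine N_muL_Df k g d N hNd hN x (n+1) _ ?_
    exact (Df k g (n+1)).add_mem (Submodule.subset_span ⟨w, hw, ω, rfl⟩)
      (Df_mono k g (by omega) hs')

lemma Kouter (n m : ℕ)
    (hVf : ∀ a ∈ Vf k g m, ∀ ω : ↥(Lam k g),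
      Cmap k g d N hNd hN (a ⊗ₜ ω) - muL k g (a ⊗ₜ ω) ∈
        Submodule.map (muL k g) (Df k g n)) :
    ∀ s ∈ Df k g m, Cmap k g d N hNd hN s - muL k g s ∈
      Submodule.map (muL k g) (Df k g n) := by
  intro s hs
  induction hs using Submodule.span_induction with
  | mem u hu =>
      obtain ⟨a, ha, ω, rfl⟩ := hu
      exact hVf a ha ω
  | zero => rw [map_zero, map_zero, sub_zero]; exact Submodule.zero_mem _
  | add u v _ _ hu hv =>
      rw [map_add, map_add, add_sub_add_comm]
      exact Submodule.add_mem _ hu hv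
  | smul c u _ hu =>
      rw [map_smul, map_smul, ← smul_sub]
      exact Submodule.smul_mem _ c hu

lemma Kdiff : ∀ n, ∀ s ∈ Df k g (n+1),
    Cmap k g d N hNd hN s - muL k g s ∈ Submodule.map (muL k g) (Df k g n) := by
  intro n
  induction n with
  | zero =>
      refine Kouter k g d N hNd hN 0 1 ?_
      intro a ha ω
      have hle : Vf k g 1 ≤ Submodule.comap (linD k g d N hNd hN ω)
          (Submodule.map (muL k g) (Df k g 0)) := by
        rw [Vf]
        apply sup_le
        · intro a' ha'
          simp only [Submodule.mem_comap, linD_apply]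
          rw [D0_Cmap k g d N hNd hN _ (Submodule.subset_span ⟨a', ha', ω, rfl⟩), sub_self]
          exact Submodule.zero_mem _
        · rw [Submodule.span_le]
          rintro u ⟨x, w, hw, rfl⟩
          simp only [SetLike.mem_coe, Submodule.mem_comap, linD_apply]
          have hD0 : Cmap k g d N hNd hN (w ⊗ₜ ω) = muL k g (w ⊗ₜ ω) :=
            D0_Cmap k g d N hNd hN _ (Submodule.subset_span ⟨w, hw, ω, rfl⟩)
          have h2 : muL k g ((ι k x * w) ⊗ₜ ω) = ι k x * muL k g (w ⊗ₜ ω) := by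
            rw [muL_tmul, muL_tmul, mul_assoc]
          have key : Cmap k g d N hNd hN ((ι k x * w) ⊗ₜ ω) -
              muL k g ((ι k x * w) ⊗ₜ ω) = N x (muL k g (w ⊗ₜ ω)) := by
            rw [Cmap_iota_mul, h2, hD0]
            abel
          rw [key]
          exact N_muL_Df k g d N hNd hN x 0 _ (Submodule.subset_span ⟨w, hw, ω, rfl⟩)
      have := hle ha
      simpa only [Submodule.mem_comap, linD_apply] using this
  | succ n ih =>
      refine Kouter k g d N hNd hN (n+1) (n+2) ?_
      intro a ha ω
      have hle : Vf k g (n+2) ≤ Submodule.comap (linD k g d N hNd hN ω)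
          (Submodule.map (muL k g) (Df k g (n+1))) := by
        rw [Vf]
        apply sup_le
        · intro a' ha'
          simp only [Submodule.mem_comap, linD_apply]
          have := ih _ (Submodule.subset_span ⟨a', ha', ω, rfl⟩)
          exact Submodule.map_mono (Df_mono k g (by omega)) this
        · rw [Submodule.span_le]
          rintro u ⟨x, w, hw, rfl⟩
          simp only [SetLike.mem_coe, Submodule.mem_comap, linD_apply]
          exact Kgenstep k g d N hNd hN n x w hw ω
            (ih _ (Submodule.subset_span ⟨w, hw, ω, rfl⟩))
      have := hle ha
      simpa only [Submodule.mem_comap, linD_apply] using this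

lemma Cmap_ker : ∀ n, ∀ s ∈ Df k g n, Cmap k g d N hNd hN s = 0 → s = 0 := by
  intro n
  induction n with
  | zero =>
      intro s hs hC
      rw [D0_Cmap k g d N hNd hN s hs] at hC
      exact muL_inj k g (by rw [hC, map_zero])
  | succ n ih =>
      intro s hs hC
      have hd := Kdiff k g d N hNd hN n s hs
      rw [hC, zero_sub, neg_mem_iff] at hd
      obtain ⟨s', hs', hmu⟩ := hd
      have : s' = s := muL_inj k g hmu
      subst this
      exact ih s' hs' hC

lemma Cmap_inj : Function.Injective (Cmap k g d N hNd hN) := by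
  intro s s' h
  have hz : Cmap k g d N hNd hN (s - s') = 0 := by rw [map_sub, h, sub_self]
  obtain ⟨n, hn⟩ := exists_Df k g (s - s')
  have := Cmap_ker k g d N hNd hN n _ hn hz
  exact sub_eq_zero.mp this

lemma N_Jg_s15 (x : g) : ∀ u ∈ Jg k g, N x u ∈ Jg k g := by
  intro u hu
  induction hu using Submodule.span_induction with
  | mem w hw =>
      obtain ⟨b, a, c, rfl⟩ := hw
      rw [hNd]
      refine (Jg k g).add_mem ?_ ?_
      · exact Submodule.subset_span ⟨N x b, a, c, rfl⟩
      · exact mul_mem_Jg k g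
          (N_Lam_s15 k g d N hNd hN x _ (Submodule.subset_span ⟨a, c, rfl⟩)) b
  | zero => simp
  | add u v _ _ hu hv => rw [map_add]; exact (Jg k g).add_mem hu hv
  | smul c u _ hu => rw [map_smul]; exact (Jg k g).smul_mem c hu

lemma XiA_Jg : ∀ a : TensorAlgebra k g, ∀ u ∈ Jg k g, XiA k g d N hNd hN a u ∈ Jg k g := by
  intro a
  induction a using TensorAlgebra.induction with
  | algebraMap r =>
      intro u hu
      rw [AlgHom.commutes, Module.algebraMap_end_apply]
      exact (Jg k g).smul_mem r hu
  | ι x =>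
      intro u hu
      rw [XiA_iota, xiL_apply]
      exact (Jg k g).add_mem (mulIota_Jg k g x u hu) (N_Jg_s15 k g d N hNd hN x u hu)
  | mul a b ha hb =>
      intro u hu
      rw [map_mul, Module.End.mul_apply]
      exact ha _ (hb u hu)
  | add a b ha hb =>
      intro u hu
      rw [map_add, LinearMap.add_apply]
      exact (Jg k g).add_mem (ha u hu) (hb u hu)

lemma Cmap_mem_Jg : ∀ s, Cmap k g d N hNd hN s ∈ Jg k g := by
  intro s
  induction s with
  | zero => simp
  | tmul a ω => rw [Cmap_tmul]; exact XiA_Jg k g d N hNd hN a _ (Lam_le_Jg k g ω.2)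
  | add u v hu hv => rw [map_add]; exact (Jg k g).add_mem hu hv

lemma Vf_mul_Lam_mem_range :
    ∀ n, ∀ b ∈ Vf k g n, ∀ ω : ↥(Lam k g),
      b * (ω : TensorAlgebra k g) ∈ LinearMap.range (Cmap k g d N hNd hN) := by
  intro n
  induction n with
  | zero =>
      intro b hb ω
      obtain ⟨c, rfl⟩ := Submodule.mem_span_singleton.mp hb
      refine ⟨c • ((1 : TensorAlgebra k g) ⊗ₜ ω), ?_⟩
      rw [map_smul, Cmap_one_tmul, smul_mul_assoc, one_mul]
  | succ n ih =>
      intro b hb ω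
      have hle : Vf k g (n+1) ≤ Submodule.comap
          (LinearMap.mulRight k (ω : TensorAlgebra k g))
          (LinearMap.range (Cmap k g d N hNd hN)) := by
        rw [Vf]
        apply sup_le
        · intro b' hb'
          simp only [Submodule.mem_comap, LinearMap.mulRight_apply]
          exact ih b' hb' ω
        · rw [Submodule.span_le]
          rintro u ⟨x, w, hw, rfl⟩
          simp only [SetLike.mem_coe, Submodule.mem_comap, LinearMap.mulRight_apply]
          obtain ⟨s, hs⟩ := ih w hw ω
          have h1 : ι k x * w * (ω : TensorAlgebra k g) =
              Cmap k g d N hNd hN (LinearMap.rTensor _ (LinearMap.mulLeft k (ι k x)) s) -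
                N x (w * (ω : TensorAlgebra k g)) := by
            rw [Cmap_rT, hs, mul_assoc]
            abel
          rw [h1, hNd]
          refine Submodule.sub_mem _ ⟨_, rfl⟩ (Submodule.add_mem _ ?_ ?_)
          · exact ih (N x w) (N_Vf k g d N hNd hN x n w hw) ω
          · exact ih w hw ⟨N x (ω : TensorAlgebra k g), N_Lam_s15 k g d N hNd hN x _ ω.2⟩
      exact hle hb
 
lemma Jg_le_range : Jg k g ≤ LinearMap.range (Cmap k g d N hNd hN) := by
  rw [Jg, Submodule.span_le]
  rintro u ⟨b, x, y, rfl⟩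
  obtain ⟨n, hb⟩ := exists_Vf k g b
  exact Vf_mul_Lam_mem_range k g d N hNd hN n b hb
    ⟨_, Submodule.subset_span ⟨x, y, rfl⟩⟩

end withN2

section withd

variable (d : g →ₗ[k] g →ₗ[k] g)

def bil2 : g →ₗ[k] g →ₗ[k] g := d - d.flip - brk k g

lemma bil2_apply (x y : g) : bil2 k g d x y = d x y - d y x - ⁅x, y⁆ := rfl

/-- The degree-two part of `t`. -/
def t0 : ↥(Lam k g) →ₗ[k] g :=
  (2:k)⁻¹ • (TensorProduct.lift (bil2 k g d) ∘ₗ jmap k g)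

lemma t0_gen (x y : g) (h : ι k x * ι k y - ι k y * ι k x ∈ Lam k g) :
    t0 k g d ⟨_, h⟩ = d x y - d y x - ⁅x, y⁆ := by
  rw [t0, LinearMap.smul_apply, LinearMap.comp_apply, jmap_gen, map_sub]
  have h1 : TensorProduct.lift (bil2 k g d) (x ⊗ₜ y) = d x y - d y x - ⁅x, y⁆ := rfl
  have h2 : TensorProduct.lift (bil2 k g d) (y ⊗ₜ x) = d y x - d x y - ⁅y, x⁆ := rfl
  rw [h1, h2]
  have h3 : (d x y - d y x - ⁅x,y⁆) - (d y x - d x y - ⁅y,x⁆)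
      = (2:k) • (d x y - d y x - ⁅x,y⁆) := by
    rw [← lie_skew x y]
    module
  rw [h3, smul_smul, inv_mul_cancel₀ (two_ne_zero), one_smul]

/-- `ρ = ` the lift of `d` to `T(g) → End(g)`. -/
def rhoA : TensorAlgebra k g →ₐ[k] Module.End k g := lift k d

def evB : TensorAlgebra k g →ₗ[k] ↥(Lam k g) →ₗ[k] g where
  toFun a := (rhoA k g d a) ∘ₗ t0 k g d
  map_add' a b := by simp only [map_add, LinearMap.add_comp]
  map_smul' c a := by simp only [map_smul, LinearMap.smul_comp, RingHom.id_apply]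

/-- The evaluation `a ⊗ ω ↦ ρ(a)(t₀(ω))`. -/
def ev : TensorAlgebra k g ⊗[k] ↥(Lam k g) →ₗ[k] g := TensorProduct.lift (evB k g d)

lemma ev_tmul (a : TensorAlgebra k g) (ω : ↥(Lam k g)) :
    ev k g d (a ⊗ₜ ω) = rhoA k g d a (t0 k g d ω) := rfl

lemma ev_one_tmul (ω : ↥(Lam k g)) : ev k g d ((1:TensorAlgebra k g) ⊗ₜ ω) = t0 k g d ω := by
  rw [ev_tmul, map_one, Module.End.one_apply]

lemma ev_rT (x : g) (s : TensorAlgebra k g ⊗[k] ↥(Lam k g)) :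
    ev k g d (LinearMap.rTensor _ (LinearMap.mulLeft k (ι k x)) s) = d x (ev k g d s) := by
  induction s with
  | zero => simp
  | tmul a ω =>
      rw [LinearMap.rTensor_tmul, LinearMap.mulLeft_apply, ev_tmul, ev_tmul, map_mul,
        Module.End.mul_apply]
      have : rhoA k g d (ι k x) = d x := lift_ι_apply (A := Module.End k g) d x
      rw [this]
  | add u v hu hv => rw [map_add, map_add, hu, hv, ← map_add, ← map_add]

end withd

/-- **Existence and uniqueness of `t`.** There is exactly one `k`-linear map
`t : J(g) → g` with `t(x ⊗ y - y ⊗ x) = x ⋄ y - y ⋄ x - [x,y]` and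
`t(x ⊗ u + ∇ₓ u) = x ⋄ t(u)`. -/
theorem t_exists_unique
    (d : g →ₗ[k] g →ₗ[k] g)
    (N : g → Module.End k (TensorAlgebra k g))
    (hNd : ∀ (x : g) (a b : TensorAlgebra k g), N x (a * b) = N x a * b + a * N x b)
    (hN : ∀ x y : g, N x (ι k y) = ι k (d x y))
    : ∃! t : Jg k g →ₗ[k] g,
      (∀ (x y : g) (h : ι k x * ι k y - ι k y * ι k x ∈ Jg k g),
        t ⟨_, h⟩ = d x y - d y x - ⁅x, y⁆)
      ∧ ∀ (x : g) (u : Jg k g) (h : ι k x * (u : TensorAlgebra k g) + N x u ∈ Jg k g),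
        t ⟨_, h⟩ = d x (t u) := by
  classical
  set C := Cmap k g d N hNd hN with hCdef
  let C' : TensorAlgebra k g ⊗[k] ↥(Lam k g) →ₗ[k] Jg k g :=
    C.codRestrict (Jg k g) (Cmap_mem_Jg k g d N hNd hN)
  have hC'coe : ∀ s, (C' s : TensorAlgebra k g) = C s := fun s => rfl
  have hbij : Function.Bijective C' := by
    constructor
    · intro s s' h
      exact Cmap_inj k g d N hNd hN (by rw [← hC'coe s, ← hC'coe s', h])
    · rintro ⟨u, hu⟩
      obtain ⟨s, hs⟩ := Jg_le_range k g d N hNd hN hu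
      exact ⟨s, Subtype.ext hs⟩
  let e : (TensorAlgebra k g ⊗[k] ↥(Lam k g)) ≃ₗ[k] Jg k g := LinearEquiv.ofBijective C' hbij
  have hecoe : ∀ s, ((e s : Jg k g) : TensorAlgebra k g) = C s := fun s => rfl
  let t : Jg k g →ₗ[k] g := ev k g d ∘ₗ e.symm.toLinearMap
  have ht : ∀ s, t (e s) = ev k g d s := by
    intro s
    show ev k g d (e.symm (e s)) = _
    rw [e.symm_apply_apply]
  have prop1 : ∀ (x y : g) (h : ι k x * ι k y - ι k y * ι k x ∈ Jg k g),
      t ⟨_, h⟩ = d x y - d y x - ⁅x, y⁆ := by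
    intro x y h
    have hl : ι k x * ι k y - ι k y * ι k x ∈ Lam k g :=
      Submodule.subset_span ⟨x, y, rfl⟩
    have he1 : e ((1 : TensorAlgebra k g) ⊗ₜ (⟨_, hl⟩ : ↥(Lam k g))) = ⟨_, h⟩ := by
      apply Subtype.ext
      rw [hecoe]
      exact Cmap_one_tmul k g d N hNd hN ⟨_, hl⟩
    rw [← he1, ht, ev_one_tmul, t0_gen]
  have prop2 : ∀ (x : g) (u : Jg k g)
      (h : ι k x * (u : TensorAlgebra k g) + N x u ∈ Jg k g),
      t ⟨_, h⟩ = d x (t u) := by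
    intro x u h
    have hu : (u : TensorAlgebra k g) = C (e.symm u) := by
      conv_lhs => rw [← e.apply_symm_apply u]
      exact hecoe (e.symm u)
    have he2 : e (LinearMap.rTensor _ (LinearMap.mulLeft k (ι k x)) (e.symm u)) = ⟨_, h⟩ := by
      apply Subtype.ext
      rw [hecoe, hCdef]
      rw [Cmap_rT k g d N hNd hN]
      rw [← hCdef, ← hu]
    rw [← he2, ht, ev_rT]
    rfl
  refine ⟨t, ⟨prop1, prop2⟩, ?_⟩
  rintro t' ⟨h1', h2'⟩
  have base : ∀ w (hw : w ∈ Lam k g), t' ⟨w, Lam_le_Jg k g hw⟩ = t0 k g d ⟨w, hw⟩ := by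
    intro w hw
    induction hw using Submodule.span_induction with
    | mem u hu =>
        obtain ⟨x, y, rfl⟩ := hu
        rw [h1' x y]
        exact (t0_gen k g d x y _).symm
    | zero =>
        show t' 0 = t0 k g d 0
        rw [map_zero, map_zero]
    | add u v hu hv ihu ihv =>
        show t' (⟨u, Lam_le_Jg k g hu⟩ + ⟨v, Lam_le_Jg k g hv⟩) =
          t0 k g d (⟨u, hu⟩ + ⟨v, hv⟩)
        rw [map_add, map_add, ihu, ihv]
    | smul c u hu ihu =>
        show t' (c • ⟨u, Lam_le_Jg k g hu⟩) = t0 k g d (c • ⟨u, hu⟩)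
        rw [map_smul, map_smul, ihu]
  have claim : ∀ n, ∀ a ∈ Vf k g n, ∀ ω : ↥(Lam k g),
      t' (e (a ⊗ₜ ω)) = ev k g d (a ⊗ₜ ω) := by
    intro n
    induction n with
    | zero =>
        intro a ha ω
        obtain ⟨c, rfl⟩ := Submodule.mem_span_singleton.mp ha
        have hsm : ((c:k) • (1:TensorAlgebra k g)) ⊗ₜ[k] ω =
            c • ((1:TensorAlgebra k g) ⊗ₜ ω) := by
          rw [TensorProduct.smul_tmul']
        rw [hsm, map_smul, map_smul, map_smul, ev_one_tmul]
        have he3 : e ((1:TensorAlgebra k g) ⊗ₜ ω) =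
            ⟨(ω : TensorAlgebra k g), Lam_le_Jg k g ω.2⟩ := by
          apply Subtype.ext
          rw [hecoe]
          exact Cmap_one_tmul k g d N hNd hN ω
        rw [he3, base (ω : TensorAlgebra k g) ω.2]
    | succ n ih =>
        intro a ha ω
        have hle : Vf k g (n+1) ≤ LinearMap.eqLocus
            ((t' ∘ₗ e.toLinearMap) ∘ₗ
              ((TensorProduct.mk k (TensorAlgebra k g) ↥(Lam k g)).flip ω))
            ((ev k g d) ∘ₗ
              ((TensorProduct.mk k (TensorAlgebra k g) ↥(Lam k g)).flip ω)) := by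
          rw [Vf]
          apply sup_le
          · intro a' ha'
            rw [LinearMap.mem_eqLocus]
            show t' (e (a' ⊗ₜ ω)) = ev k g d (a' ⊗ₜ ω)
            exact ih a' ha' ω
          · rw [Submodule.span_le]
            rintro u ⟨x, w, hw, rfl⟩
            rw [SetLike.mem_coe, LinearMap.mem_eqLocus]
            show t' (e ((ι k x * w) ⊗ₜ ω)) = ev k g d ((ι k x * w) ⊗ₜ ω)
            have hrt : ((ι k x * w) ⊗ₜ[k] ω : TensorAlgebra k g ⊗[k] ↥(Lam k g)) =
                LinearMap.rTensor _ (LinearMap.mulLeft k (ι k x)) (w ⊗ₜ ω) := rfl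
            have hmem : ι k x * ((e (w ⊗ₜ ω) : Jg k g) : TensorAlgebra k g) +
                N x ((e (w ⊗ₜ ω) : Jg k g) : TensorAlgebra k g) ∈ Jg k g := by
              rw [hecoe, hCdef, ← Cmap_rT k g d N hNd hN]
              exact Cmap_mem_Jg k g d N hNd hN _
            have he4 : e ((ι k x * w) ⊗ₜ ω) = ⟨_, hmem⟩ := by
              apply Subtype.ext
              rw [hecoe, hrt, hCdef, Cmap_rT k g d N hNd hN]
              rfl
            rw [he4, h2' x (e (w ⊗ₜ ω)) hmem, ih w hw ω, hrt, ev_rT]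
        have := hle ha
        rw [LinearMap.mem_eqLocus] at this
        exact this
  have main : ∀ s, t' (e s) = ev k g d s := by
    intro s
    induction s with
    | zero => rw [map_zero, map_zero, map_zero]
    | tmul a ω =>
        obtain ⟨n, hn⟩ := exists_Vf k g a
        exact claim n a hn ω
    | add u v hu hv => rw [map_add, map_add, map_add, hu, hv]
  apply LinearMap.ext
  intro u
  have hu : u = e (e.symm u) := (e.apply_symm_apply u).symm
  rw [hu, main (e.symm u), ht]
end
end
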